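/- arXiv:1912.00723 — 2 statements merged into one kernel-verified Lean document; each statement's English description precedes it below -/
import Mathlib

section
/- In the IRL1 setting with level-set boundedness, either the sequence {x^k} converges (i.e., has a unique limit point), or the set Ω of its limit points is a compact connected set, all of whose elements have the same sign pattern (hence Ω is contained in the closure of a single orthant with common support I*), and the objective F(x) = f(x) + λ Σ_{i=1}^n |x_i|^p takes the same value at every point of Ω. -/
open Filter Topology

/-- The weight function `w(t, s) = p(|t| + s)^(p-1)`. -/
noncomputable def wfun (p t s : ℝ) : ℝ := p * (|t| + s) ^ (p - 1)

/-- The IRL1 setting (Algorithm 2.1 of the paper): fixed data `p ∈ (0,1)`, `λ > 0`,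
`μ ∈ (0,1)`, a differentiable `f` with `Lf`-Lipschitz gradient (`Lf ≥ 0`), iterates
`x^k`, positive parameters `ε^k` with `ε^{k+1} ≤ μ ε^k` componentwise, and for each `k`
a differentiable model `Q_k` with `∇Q_k(x^k) = ∇f(x^k)`, `M`-strongly convex with
`M > Lf/2` (strong convexity meaning `z ↦ Q_k z - (M/2)‖z‖²` is convex), `∇Q_k`
`L`-Lipschitz, such that `x^{k+1}` is a global minimizer of
`G(·; x^k, ε^k) = Q_k(·) + λ Σᵢ w(xᵢ^k, εᵢ^k)|·ᵢ|`. -/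
structure IRL1 (n : ℕ) where
  p : ℝ
  lam : ℝ
  mu : ℝ
  Lf : ℝ
  M : ℝ
  L : ℝ
  f : EuclideanSpace ℝ (Fin n) → ℝ
  x : ℕ → EuclideanSpace ℝ (Fin n)
  eps : ℕ → Fin n → ℝ
  Q : ℕ → EuclideanSpace ℝ (Fin n) → ℝ
  hp0 : 0 < p
  hp1 : p < 1
  hlam : 0 < lam
  hmu0 : 0 < mu
  hmu1 : mu < 1
  hLf : 0 ≤ Lf
  hM : Lf / 2 < M
  hf_diff : Differentiable ℝ f
  hf_lip : ∀ a b, ‖gradient f a - gradient f b‖ ≤ Lf * ‖a - b‖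
  heps_pos : ∀ k i, 0 < eps k i
  heps_dec : ∀ k i, eps (k + 1) i ≤ mu * eps k i
  hQ_diff : ∀ k, Differentiable ℝ (Q k)
  hQ_grad : ∀ k, gradient (Q k) (x k) = gradient f (x k)
  hQ_sconv : ∀ k, ConvexOn ℝ Set.univ (fun z => Q k z - M / 2 * ‖z‖ ^ 2)
  hQ_lip : ∀ k a b, ‖gradient (Q k) a - gradient (Q k) b‖ ≤ L * ‖a - b‖
  hmin : ∀ k, ∀ z : EuclideanSpace ℝ (Fin n),
    Q k (x (k + 1)) + lam * ∑ i, wfun p (x k i) (eps k i) * |x (k + 1) i|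
      ≤ Q k z + lam * ∑ i, wfun p (x k i) (eps k i) * |z i|

/-- The smoothed objective `F(x, ε) = f(x) + λ Σᵢ (|xᵢ| + εᵢ)^p`. -/
noncomputable def IRL1.Feps {n : ℕ} (S : IRL1 n)
    (z : EuclideanSpace ℝ (Fin n)) (e : Fin n → ℝ) : ℝ :=
  S.f z + S.lam * ∑ i, (|z i| + e i) ^ S.p

/-- The objective `F(x) = f(x) + λ Σᵢ |xᵢ|^p`. -/
noncomputable def IRL1.Fobj {n : ℕ} (S : IRL1 n) (z : EuclideanSpace ℝ (Fin n)) : ℝ :=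
  S.f z + S.lam * ∑ i, |z i| ^ S.p

/-- The subproblem objective `G(z; x^k, ε^k)`. -/
noncomputable def IRL1.G {n : ℕ} (S : IRL1 n) (k : ℕ)
    (z : EuclideanSpace ℝ (Fin n)) : ℝ :=
  S.Q k z + S.lam * ∑ i, wfun S.p (S.x k i) (S.eps k i) * |z i|

/-- The level set `{x : F(x) ≤ F(x⁰, ε⁰)}` is bounded. -/
def IRL1.LevelBounded {n : ℕ} (S : IRL1 n) : Prop :=
  Bornology.IsBounded {z : EuclideanSpace ℝ (Fin n) | S.Fobj z ≤ S.Feps (S.x 0) (S.eps 0)}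

/-- The set of cluster points (limits of convergent subsequences) of a sequence. -/
def clusterSet {n : ℕ} (x : ℕ → EuclideanSpace ℝ (Fin n)) : Set (EuclideanSpace ℝ (Fin n)) :=
  {z | ∃ φ : ℕ → ℕ, StrictMono φ ∧ Tendsto (fun k => x (φ k)) atTop (nhds z)}


open InnerProductSpace Set

variable {E : Type*} [NormedAddCommGroup E] [InnerProductSpace ℝ E] [CompleteSpace E]

lemma line_hasDerivAt {f : E → ℝ} {y d : E} (hf : Differentiable ℝ f) (t : ℝ) :
    HasDerivAt (fun s : ℝ => f (y + s • d)) ⟪gradient f (y + t • d), d⟫_ℝ t := by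
  have h1 : HasFDerivAt f (toDual ℝ E (gradient f (y + t • d))) (y + t • d) :=
    ((hf _).hasGradientAt).hasFDerivAt
  have h2 : HasDerivAt (fun s : ℝ => y + s • d) d t := by
    simpa using ((hasDerivAt_id t).smul_const d).const_add y
  have := h1.comp_hasDerivAt t h2
  simpa [toDual_apply_apply, Function.comp_def] using this

/-- Descent lemma -/
lemma descent_lemma {f : E → ℝ} {Lf : ℝ} (hf : Differentiable ℝ f)
    (hlip : ∀ a b, ‖gradient f a - gradient f b‖ ≤ Lf * ‖a - b‖) (a b : E) :
    f b ≤ f a + ⟪gradient f a, b - a⟫_ℝ + Lf / 2 * ‖b - a‖ ^ 2 := by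
  set d := b - a with hd
  set g : ℝ → ℝ := fun t => f (a + t • d) with hg
  have hderiv : ∀ t : ℝ, HasDerivAt g ⟪gradient f (a + t • d), d⟫_ℝ t := fun t =>
    line_hasDerivAt hf t
  set h : ℝ → ℝ := fun t => g t - t * ⟪gradient f a, d⟫_ℝ - Lf / 2 * t ^ 2 * ‖d‖ ^ 2 with hh
  have hderivh : ∀ t : ℝ, HasDerivAt h
      (⟪gradient f (a + t • d), d⟫_ℝ - ⟪gradient f a, d⟫_ℝ - Lf * t * ‖d‖ ^ 2) t := by
    intro t
    have : HasDerivAt (fun t : ℝ => t * ⟪gradient f a, d⟫_ℝ) ⟪gradient f a, d⟫_ℝ t := by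
      simpa using (hasDerivAt_id t).mul_const _
    have h2 : HasDerivAt (fun t : ℝ => Lf / 2 * t ^ 2 * ‖d‖ ^ 2) (Lf * t * ‖d‖ ^ 2) t := by
      have := ((hasDerivAt_pow 2 t).const_mul (Lf / 2)).mul_const (‖d‖ ^ 2)
      exact this.congr_deriv (by push_cast; ring)
    exact ((hderiv t).sub this).sub h2
  have hmono : AntitoneOn h (Icc 0 1) := by
    apply antitoneOn_of_deriv_nonpos (convex_Icc 0 1)
    · exact (fun t _ => ((hderivh t).differentiableAt).continuousAt.continuousWithinAt)
    · exact fun t _ => ((hderivh t).differentiableAt).differentiableWithinAt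
    · intro t ht
      rw [interior_Icc] at ht
      rw [(hderivh t).deriv]
      have hb : ⟪gradient f (a + t • d) - gradient f a, d⟫_ℝ ≤ Lf * t * ‖d‖ ^ 2 := by
        calc ⟪gradient f (a + t • d) - gradient f a, d⟫_ℝ
            ≤ ‖gradient f (a + t • d) - gradient f a‖ * ‖d‖ := real_inner_le_norm _ _
          _ ≤ (Lf * ‖(a + t • d) - a‖) * ‖d‖ := by
              apply mul_le_mul_of_nonneg_right (hlip _ _) (norm_nonneg _)
          _ = Lf * t * ‖d‖ ^ 2 := by
              rw [add_sub_cancel_left, norm_smul]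
              simp [abs_of_pos ht.1]
              ring
      rw [inner_sub_left] at hb
      linarith
  have h01 := hmono (by simp : (0:ℝ) ∈ Icc (0:ℝ) 1) (by simp : (1:ℝ) ∈ Icc (0:ℝ) 1) zero_le_one
  have hg0 : g 0 = f a := by simp [hg]
  have hg1 : g 1 = f b := by simp [hg, hd]
  simp only [hh, hg0, hg1] at h01
  norm_num at h01
  have hfd : (fderiv ℝ f a) d = ⟪gradient f a, d⟫_ℝ := by simp
  linarith

omit [CompleteSpace E] in
lemma norm_combo_sq (a b : E) (t : ℝ) :
    ‖(1 - t) • a + t • b‖ ^ 2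
      = (1 - t) * ‖a‖ ^ 2 + t * ‖b‖ ^ 2 - t * (1 - t) * ‖a - b‖ ^ 2 := by
  have h1 : ∀ v : E, ‖v‖ ^ 2 = ⟪v, v⟫_ℝ := fun v => (real_inner_self_eq_norm_sq v).symm
  rw [h1, h1, h1, h1]
  simp only [inner_add_left, inner_add_right, inner_sub_left, inner_sub_right,
    real_inner_smul_left, real_inner_smul_right, real_inner_comm a b]
  ring

lemma slope_tendsto {g : ℝ → ℝ} {g' : ℝ} (h : HasDerivAt g g' 0) :
    Tendsto (fun t : ℝ => (g t - g 0) / t) (𝓝[>] (0:ℝ)) (𝓝 g') := by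
  have := hasDerivAt_iff_tendsto_slope.mp h
  have h2 : Tendsto (slope g 0) (𝓝[>] (0:ℝ)) (𝓝 g') :=
    this.mono_left (nhdsWithin_mono _ (fun t ht => ne_of_gt ht))
  refine h2.congr (fun t => ?_)
  simp [slope_def_field, div_eq_inv_mul]

lemma sconv_first_order {Q : E → ℝ} {m : ℝ} (hQ : Differentiable ℝ Q)
    (hconv : ConvexOn ℝ Set.univ (fun z => Q z - m / 2 * ‖z‖ ^ 2)) (x y : E) :
    Q x + ⟪gradient Q x, y - x⟫_ℝ + m / 2 * ‖y - x‖ ^ 2 ≤ Q y := by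
  set d := y - x with hd
  set g : ℝ → ℝ := fun t => Q (x + t • d) with hg
  have hder : HasDerivAt g ⟪gradient Q x, d⟫_ℝ 0 := by
    have := line_hasDerivAt (y := x) (d := d) hQ 0
    simpa using this
  have key : ∀ t : ℝ, t ∈ Set.Ioc (0:ℝ) 1 →
      (g t - g 0) / t ≤ m * ⟪x, d⟫_ℝ + m * t / 2 * ‖d‖ ^ 2
        + (Q y - m / 2 * ‖y‖ ^ 2) - (Q x - m / 2 * ‖x‖ ^ 2) := by
    intro t ht
    have hcx : x + t • d = (1 - t) • x + t • y := by
      rw [hd]; module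
    have hc := hconv.2 (Set.mem_univ x) (Set.mem_univ y)
      (by linarith [ht.1, ht.2] : (0:ℝ) ≤ 1 - t) (le_of_lt ht.1) (by ring)
    simp only [smul_eq_mul] at hc
    rw [← hcx] at hc
    have hnorm : ‖x + t • d‖ ^ 2 = ‖x‖ ^ 2 + 2 * t * ⟪x, d⟫_ℝ + t ^ 2 * ‖d‖ ^ 2 := by
      have h1 : ∀ v : E, ‖v‖ ^ 2 = ⟪v, v⟫_ℝ := fun v => (real_inner_self_eq_norm_sq v).symm
      rw [h1, h1, h1]
      simp only [inner_add_left, inner_add_right, real_inner_smul_left, real_inner_smul_right,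
        real_inner_comm x d]
      ring
    have hg0 : g 0 = Q x := by simp [hg]
    have hgt : g t = Q (x + t • d) := rfl
    rw [div_le_iff₀ ht.1]
    have hQt : Q (x + t • d) - m / 2 * ‖x + t • d‖ ^ 2
        ≤ (1 - t) * (Q x - m / 2 * ‖x‖ ^ 2) + t * (Q y - m / 2 * ‖y‖ ^ 2) := hc
    rw [hnorm] at hQt
    rw [hgt, hg0]
    nlinarith [hQt]
  have hlim : Tendsto (fun t : ℝ => m * ⟪x, d⟫_ℝ + m * t / 2 * ‖d‖ ^ 2
        + (Q y - m / 2 * ‖y‖ ^ 2) - (Q x - m / 2 * ‖x‖ ^ 2)) (𝓝[>] (0:ℝ))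
      (𝓝 (m * ⟪x, d⟫_ℝ + (Q y - m / 2 * ‖y‖ ^ 2) - (Q x - m / 2 * ‖x‖ ^ 2))) := by
    have hc : Continuous (fun t : ℝ => m * ⟪x, d⟫_ℝ + m * t / 2 * ‖d‖ ^ 2
        + (Q y - m / 2 * ‖y‖ ^ 2) - (Q x - m / 2 * ‖x‖ ^ 2)) := by fun_prop
    have h0 := (hc.tendsto 0).mono_left (nhdsWithin_le_nhds (s := Set.Ioi (0:ℝ)))
    simpa using h0
  have hineq : ⟪gradient Q x, d⟫_ℝ
      ≤ m * ⟪x, d⟫_ℝ + (Q y - m / 2 * ‖y‖ ^ 2) - (Q x - m / 2 * ‖x‖ ^ 2) := by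
    refine le_of_tendsto_of_tendsto (slope_tendsto hder) hlim ?_
    exact Filter.eventually_of_mem (Ioc_mem_nhdsGT_of_mem ⟨le_refl 0, zero_lt_one⟩) key
  have hexp : ‖y - x‖ ^ 2 = ‖y‖ ^ 2 - 2 * ⟪x, d⟫_ℝ - ‖x‖ ^ 2 := by
    have h1 : ∀ v : E, ‖v‖ ^ 2 = ⟪v, v⟫_ℝ := fun v => (real_inner_self_eq_norm_sq v).symm
    rw [hd, h1, h1, h1]
    simp only [inner_sub_left, inner_sub_right, real_inner_comm x y]
    ring
  rw [hexp]
  linarith [hineq]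

omit [CompleteSpace E] in
lemma min_quadratic_growth {G : E → ℝ} {m : ℝ} (hm : 0 ≤ m)
    (hconv : ConvexOn ℝ Set.univ (fun z => G z - m / 2 * ‖z‖ ^ 2))
    {xm : E} (hxm : ∀ z, G xm ≤ G z) (z : E) :
    G xm + m / 2 * ‖z - xm‖ ^ 2 ≤ G z := by
  have key : ∀ t : ℝ, t ∈ Set.Ioc (0:ℝ) 1 →
      G xm + m / 2 * (1 - t) * ‖z - xm‖ ^ 2 ≤ G z := by
    intro t ht
    have hc := hconv.2 (Set.mem_univ xm) (Set.mem_univ z)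
      (by linarith [ht.1, ht.2] : (0:ℝ) ≤ 1 - t) (le_of_lt ht.1) (by ring)
    simp only [smul_eq_mul] at hc
    have hid := norm_combo_sq (E := E) xm z t
    have hmin := hxm ((1 - t) • xm + t • z)
    have hzx : ‖xm - z‖ ^ 2 = ‖z - xm‖ ^ 2 := by rw [norm_sub_rev]
    rw [hid, hzx] at hc
    nlinarith [hc, hmin, ht.1, ht.2]
  have hlim : Tendsto (fun t : ℝ => G xm + m / 2 * (1 - t) * ‖z - xm‖ ^ 2) (𝓝[>] (0:ℝ))
      (𝓝 (G xm + m / 2 * ‖z - xm‖ ^ 2)) := by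
    have hc : Continuous (fun t : ℝ => G xm + m / 2 * (1 - t) * ‖z - xm‖ ^ 2) := by fun_prop
    have h0 := (hc.tendsto 0).mono_left (nhdsWithin_le_nhds (s := Set.Ioi (0:ℝ)))
    simpa using h0
  refine le_of_tendsto_of_tendsto hlim tendsto_const_nhds ?_
  exact Filter.eventually_of_mem (Ioc_mem_nhdsGT_of_mem ⟨le_refl 0, zero_lt_one⟩) key

/-- tangent line inequality for rpow, 0<p<1: b^p ≤ a^p + p a^(p-1) (b - a), a>0, b≥0 -/
lemma rpow_tangent {p a b : ℝ} (hp0 : 0 < p) (hp1 : p < 1) (ha : 0 < a) (hb : 0 ≤ b) :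
    b ^ p ≤ a ^ p + p * a ^ (p - 1) * (b - a) := by
  rcases eq_or_lt_of_le hb with hb0 | hb
  · rw [← hb0, Real.zero_rpow (ne_of_gt hp0)]
    have h1 : a ^ (p - 1) * a = a ^ p := by
      rw [← Real.rpow_add_one (ne_of_gt ha) (p - 1)]
      norm_num
    have h2 : 0 < a ^ p := Real.rpow_pos_of_pos ha p
    nlinarith [h2, h1]
  · have hs : -1 ≤ b / a - 1 := by
      have : 0 < b / a := div_pos hb ha
      linarith
    have hber := rpow_one_add_le_one_add_mul_self hs (le_of_lt hp0) (le_of_lt hp1)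
    have hba : (1 : ℝ) + (b / a - 1) = b / a := by ring
    rw [hba] at hber
    have hbd : b = a * (b / a) := by field_simp
    have key : b ^ p = a ^ p * (b / a) ^ p := by
      rw [hbd, Real.mul_rpow (le_of_lt ha) (le_of_lt (div_pos hb ha))]
      congr 1
      rw [← hbd]
    have hap : 0 < a ^ p := Real.rpow_pos_of_pos ha p
    have hsplit : a ^ p * (1 + p * (b / a - 1)) = a ^ p + p * a ^ (p - 1) * (b - a) := by
      have h1 : a ^ (p - 1) * a = a ^ p := by
        rw [← Real.rpow_add_one (ne_of_gt ha) (p - 1)]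
        norm_num
      field_simp
      linear_combination (-(p * (b - a))) * h1
    calc b ^ p = a ^ p * (b / a) ^ p := key
      _ ≤ a ^ p * (1 + p * (b / a - 1)) := by
          apply mul_le_mul_of_nonneg_left hber (le_of_lt hap)
      _ = a ^ p + p * a ^ (p - 1) * (b - a) := hsplit

lemma mem_clusterSet_iff {n : ℕ} {x : ℕ → EuclideanSpace ℝ (Fin n)}
    {z : EuclideanSpace ℝ (Fin n)} :
    z ∈ clusterSet x ↔ ∀ ε > 0, ∃ᶠ k in atTop, dist (x k) z < ε := by
  constructor
  · rintro ⟨φ, hφ, hlim⟩ ε hε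
    rw [Metric.tendsto_atTop] at hlim
    obtain ⟨N, hN⟩ := hlim ε hε
    rw [frequently_atTop]
    intro m
    exact ⟨φ (max N m), le_trans (le_max_right N m) (hφ.le_apply), hN _ (le_max_left N m)⟩
  · intro h
    have h2 : ∀ m : ℕ, ∃ᶠ k in atTop, dist (x k) z < 1 / (m + 1) := fun m =>
      h _ (by positivity)
    obtain ⟨φ, hφ, hp⟩ := Filter.extraction_forall_of_frequently h2
    refine ⟨φ, hφ, ?_⟩
    rw [Metric.tendsto_atTop]
    intro ε hε
    obtain ⟨N, hN⟩ := exists_nat_one_div_lt hε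
    refine ⟨N, fun k hk => ?_⟩
    have hcast : (N : ℝ) ≤ (k : ℝ) := Nat.cast_le.mpr hk
    have h3 : (1 : ℝ) / (k + 1) ≤ 1 / (N + 1) := by
      apply one_div_le_one_div_of_le (by positivity)
      linarith
    exact lt_of_lt_of_le (hp k) (le_of_lt (lt_of_le_of_lt h3 hN))

lemma clusterSet_closed {n : ℕ} (x : ℕ → EuclideanSpace ℝ (Fin n)) :
    IsClosed (clusterSet x) := by
  rw [← closure_subset_iff_isClosed]
  intro z hz
  rw [mem_clusterSet_iff]
  intro ε hε
  obtain ⟨z', hz', hdz⟩ := Metric.mem_closure_iff.mp hz (ε / 2) (by linarith)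
  have h2 := mem_clusterSet_iff.mp hz' (ε / 2) (by linarith)
  refine h2.mono (fun k hk => ?_)
  calc dist (x k) z ≤ dist (x k) z' + dist z' z := dist_triangle _ _ _
    _ < ε / 2 + ε / 2 := by rw [dist_comm z' z]; exact add_lt_add hk hdz
    _ = ε := by ring

lemma clusterSet_subset_ball {n : ℕ} {x : ℕ → EuclideanSpace ℝ (Fin n)} {R : ℝ}
    (hR : ∀ k, ‖x k‖ ≤ R) : clusterSet x ⊆ Metric.closedBall 0 R := by
  rintro z ⟨φ, hφ, hlim⟩
  rw [Metric.mem_closedBall, dist_zero_right]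
  exact le_of_tendsto (hlim.norm) (Filter.Eventually.of_forall fun k => hR (φ k))

lemma clusterSet_compact {n : ℕ} {x : ℕ → EuclideanSpace ℝ (Fin n)} {R : ℝ}
    (hR : ∀ k, ‖x k‖ ≤ R) : IsCompact (clusterSet x) :=
  (isCompact_closedBall (0 : EuclideanSpace ℝ (Fin n)) R).of_isClosed_subset
    (clusterSet_closed x) (clusterSet_subset_ball hR)

lemma clusterSet_nonempty {n : ℕ} {x : ℕ → EuclideanSpace ℝ (Fin n)} {R : ℝ}
    (hR : ∀ k, ‖x k‖ ≤ R) : (clusterSet x).Nonempty := by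
  obtain ⟨a, _, φ, hφ, hlim⟩ := tendsto_subseq_of_bounded
    (Metric.isBounded_closedBall (x := (0 : EuclideanSpace ℝ (Fin n))) (r := R))
    (fun k => by simpa [Metric.mem_closedBall, dist_zero_right] using hR k)
  exact ⟨a, φ, hφ, hlim⟩

lemma clusterSet_preconnected {n : ℕ} {x : ℕ → EuclideanSpace ℝ (Fin n)} {R : ℝ}
    (hR : ∀ k, ‖x k‖ ≤ R)
    (hstep : Tendsto (fun k => dist (x (k + 1)) (x k)) atTop (𝓝 0)) :
    IsPreconnected (clusterSet x) := by
  set Ω := clusterSet x with hΩ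
  rw [isPreconnected_iff_subset_of_fully_disjoint_closed (clusterSet_closed x)]
  intro A B hA hB hcover hdisj
  by_contra hcon
  push_neg at hcon
  obtain ⟨hnA, hnB⟩ := hcon
  obtain ⟨b0, hb0Ω, hb0A⟩ := Set.not_subset.mp hnA
  obtain ⟨a0, ha0Ω, ha0B⟩ := Set.not_subset.mp hnB
  have hb0B : b0 ∈ B := by rcases hcover hb0Ω with h | h; exact absurd h hb0A; exact h
  have ha0A : a0 ∈ A := by rcases hcover ha0Ω with h | h; exact h; exact absurd h ha0B
  set A' : Set (EuclideanSpace ℝ (Fin n)) := Ω ∩ A with hA'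
  set B' : Set (EuclideanSpace ℝ (Fin n)) := Ω ∩ B with hB'
  have hA'ne : A'.Nonempty := ⟨a0, ha0Ω, ha0A⟩
  have hB'ne : B'.Nonempty := ⟨b0, hb0Ω, hb0B⟩
  have hA'cl : IsClosed A' := (clusterSet_closed x).inter hA
  have hB'cl : IsClosed B' := (clusterSet_closed x).inter hB
  have hA'cp : IsCompact A' := ((clusterSet_compact hR).inter_right hA)
  -- positive separation
  have hposd : ∀ a ∈ A', 0 < Metric.infDist a B' := by
    intro a ha
    rw [← hB'cl.notMem_iff_infDist_pos hB'ne]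
    intro hmem
    exact (hdisj.ne_of_mem ha.2 hmem.2) rfl
  obtain ⟨amin, haminA, hamin⟩ := hA'cp.exists_isMinOn hA'ne
    ((Metric.continuous_infDist_pt B').continuousOn)
  set δ := Metric.infDist amin B' with hδ
  have hδpos : 0 < δ := hposd amin haminA
  have hsep : ∀ a ∈ A', ∀ b ∈ B', δ ≤ dist a b := by
    intro a ha b hb
    calc δ ≤ Metric.infDist a B' := hamin ha
      _ ≤ dist a b := Metric.infDist_le_dist_of_mem hb
  set G : ℕ → ℝ := fun k => Metric.infDist (x k) A' with hG
  have hGlip : ∀ k, G (k + 1) ≤ G k + dist (x (k + 1)) (x k) := fun k =>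
    Metric.infDist_le_infDist_add_dist
  -- frequently small
  have hG1 : ∃ᶠ k in atTop, G k < δ / 4 := by
    have h1 := mem_clusterSet_iff.mp ha0Ω (δ / 4) (by linarith)
    exact h1.mono (fun k hk =>
      lt_of_le_of_lt (Metric.infDist_le_dist_of_mem ⟨ha0Ω, ha0A⟩) hk)
  -- frequently big
  have hG2 : ∃ᶠ k in atTop, 3 * δ / 4 < G k := by
    have h1 := mem_clusterSet_iff.mp hb0Ω (δ / 4) (by linarith)
    refine h1.mono (fun k hk => ?_)
    have h2 : Metric.infDist b0 A' ≤ G k + dist b0 (x k) :=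
      Metric.infDist_le_infDist_add_dist
    have h3 : δ ≤ Metric.infDist b0 A' := by
      refine le_of_not_gt (fun hlt => ?_)
      obtain ⟨y, hy, hdy⟩ := (Metric.infDist_lt_iff hA'ne).mp hlt
      exact absurd (hsep y hy b0 ⟨hb0Ω, hb0B⟩) (by rw [dist_comm]; linarith)
    rw [dist_comm b0 (x k)] at h2
    linarith
  -- frequently in the band
  have hband : ∃ᶠ k in atTop, δ / 4 ≤ G k ∧ G k ≤ 3 * δ / 4 := by
    rw [frequently_atTop]
    intro N
    obtain ⟨N₂, hN₂⟩ := (Metric.tendsto_atTop.mp hstep (δ / 2) (by linarith))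
    obtain ⟨k₁, hk₁ge, hk₁⟩ := frequently_atTop.mp hG1 (max N N₂)
    obtain ⟨k₂, hk₂ge, hk₂⟩ := frequently_atTop.mp hG2 (k₁ + 1)
    classical
    have hex : ∃ m, k₁ < m ∧ δ / 4 ≤ G m := ⟨k₂, hk₂ge, by linarith⟩
    set t := Nat.find hex with ht
    obtain ⟨htgt, htG⟩ := Nat.find_spec hex
    have ht1 : 1 ≤ t := by omega
    have hprev : G (t - 1) < δ / 4 := by
      rcases eq_or_lt_of_le (Nat.le_sub_one_of_lt htgt) with h | h
      · rw [← h]; exact hk₁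
      · have := Nat.find_min hex (m := t - 1) (by omega)
        push_neg at this
        exact this h
    have hstep2 : dist (x (t - 1 + 1)) (x (t - 1)) < δ / 2 := by
      have hle : N₂ ≤ k₁ := le_trans (le_max_right _ _) hk₁ge
      have := hN₂ (t - 1) (by omega)
      rwa [Real.dist_0_eq_abs, abs_of_nonneg dist_nonneg] at this
    have htt : t - 1 + 1 = t := by omega
    rw [htt] at hstep2
    have hup : G t ≤ G (t - 1) + dist (x t) (x (t - 1)) := by
      have := hGlip (t - 1)
      rwa [htt] at this
    refine ⟨t, ?_, htG, by linarith⟩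
    have : N ≤ k₁ := le_trans (le_max_left _ _) hk₁ge
    omega
  -- extract a cluster point in the band
  obtain ⟨φ, hφ, hφband⟩ := Filter.extraction_of_frequently_atTop hband
  obtain ⟨z, _, ψ, hψ, hzlim⟩ := tendsto_subseq_of_bounded
    (Metric.isBounded_closedBall (x := (0 : EuclideanSpace ℝ (Fin n))) (r := R))
    (fun m => by simpa [Metric.mem_closedBall, dist_zero_right] using hR (φ m))
  have hzΩ : z ∈ Ω := ⟨φ ∘ ψ, hφ.comp hψ, hzlim⟩
  have hzlim2 : Tendsto (fun m => G (φ (ψ m))) atTop (𝓝 (Metric.infDist z A')) :=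
    ((Metric.continuous_infDist_pt A').tendsto z).comp hzlim
  have hzlo : δ / 4 ≤ Metric.infDist z A' :=
    le_of_tendsto_of_tendsto tendsto_const_nhds hzlim2
      (Filter.Eventually.of_forall (fun m => (hφband (ψ m)).1))
  have hzhi : Metric.infDist z A' ≤ 3 * δ / 4 :=
    le_of_tendsto_of_tendsto hzlim2 tendsto_const_nhds
      (Filter.Eventually.of_forall (fun m => (hφband (ψ m)).2))
  rcases hcover hzΩ with hz | hz
  · have : Metric.infDist z A' = 0 := Metric.infDist_zero_of_mem ⟨hzΩ, hz⟩
    linarith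
  · have h3 : δ ≤ Metric.infDist z A' := by
      refine le_of_not_gt (fun hlt => ?_)
      obtain ⟨y, hy, hdy⟩ := (Metric.infDist_lt_iff hA'ne).mp hlt
      exact absurd (hsep y hy z ⟨hzΩ, hz⟩) (by rw [dist_comm]; linarith)
    linarith

namespace IRL1

variable {n : ℕ} (S : IRL1 n)

lemma wpos (k : ℕ) (i : Fin n) : 0 < wfun S.p (S.x k i) (S.eps k i) := by
  have h1 : 0 < |S.x k i| + S.eps k i := by
    have := S.heps_pos k i
    have := abs_nonneg (S.x k i)
    linarith
  exact mul_pos S.hp0 (Real.rpow_pos_of_pos h1 _)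

lemma hMpos : 0 < S.M := lt_of_le_of_lt (by linarith [S.hLf] : (0:ℝ) ≤ S.Lf / 2) S.hM

lemma weighted_l1_convex (k : ℕ) :
    ConvexOn ℝ Set.univ (fun z : EuclideanSpace ℝ (Fin n) =>
      S.lam * ∑ i, wfun S.p (S.x k i) (S.eps k i) * |z i|) := by
  refine ⟨convex_univ, ?_⟩
  intro u _ v _ a b ha hb hab
  simp only [smul_eq_mul]
  have hcoord : ∀ i, |(a • u + b • v) i| ≤ a * |u i| + b * |v i| := by
    intro i
    have : (a • u + b • v) i = a * u i + b * v i := rfl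
    rw [this]
    calc |a * u i + b * v i| ≤ |a * u i| + |b * v i| := abs_add_le _ _
      _ = a * |u i| + b * |v i| := by
          rw [abs_mul, abs_mul, abs_of_nonneg ha, abs_of_nonneg hb]
  have hsum : ∑ i, wfun S.p (S.x k i) (S.eps k i) * |(a • u + b • v) i|
      ≤ ∑ i, wfun S.p (S.x k i) (S.eps k i) * (a * |u i| + b * |v i|) := by
    apply Finset.sum_le_sum
    intro i _
    exact mul_le_mul_of_nonneg_left (hcoord i) (le_of_lt (S.wpos k i))
  have hlam := S.hlam
  calc S.lam * ∑ i, wfun S.p (S.x k i) (S.eps k i) * |(a • u + b • v) i|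
      ≤ S.lam * ∑ i, wfun S.p (S.x k i) (S.eps k i) * (a * |u i| + b * |v i|) := by
        exact mul_le_mul_of_nonneg_left hsum (le_of_lt hlam)
    _ = a * (S.lam * ∑ i, wfun S.p (S.x k i) (S.eps k i) * |u i|)
        + b * (S.lam * ∑ i, wfun S.p (S.x k i) (S.eps k i) * |v i|) := by
        rw [Finset.mul_sum, Finset.mul_sum, Finset.mul_sum, Finset.mul_sum, Finset.mul_sum,
          ← Finset.sum_add_distrib]
        apply Finset.sum_congr rfl
        intro i _
        ring

lemma G_sconv (k : ℕ) :
    ConvexOn ℝ Set.univ (fun z : EuclideanSpace ℝ (Fin n) => S.G k z - S.M / 2 * ‖z‖ ^ 2) := by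
  have h := (S.hQ_sconv k).add (S.weighted_l1_convex k)
  convert h using 2 with z
  · rfl
  simp only [IRL1.G, Pi.add_apply]
  ring

lemma G_min (k : ℕ) (z : EuclideanSpace ℝ (Fin n)) :
    S.G k (S.x (k + 1)) + S.M / 2 * ‖z - S.x (k + 1)‖ ^ 2 ≤ S.G k z :=
  min_quadratic_growth (le_of_lt S.hMpos) (S.G_sconv k) (fun z' => S.hmin k z') z

lemma eps_mono (k : ℕ) (i : Fin n) : S.eps (k + 1) i ≤ S.eps k i := by
  have h1 := S.heps_dec k i
  have h2 := S.heps_pos k i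
  nlinarith [S.hmu1, S.hmu0]

/-- Key descent inequality. -/
lemma descent (k : ℕ) :
    S.Feps (S.x (k + 1)) (S.eps (k + 1))
      ≤ S.Feps (S.x k) (S.eps k) - (S.M - S.Lf / 2) * ‖S.x (k + 1) - S.x k‖ ^ 2 := by
  set d : EuclideanSpace ℝ (Fin n) := S.x (k + 1) - S.x k with hd
  -- (v) rpow tangent, summed
  have hsum : ∑ i, (|S.x (k + 1) i| + S.eps (k + 1) i) ^ S.p
      ≤ ∑ i, (|S.x k i| + S.eps k i) ^ S.p
        + ∑ i, wfun S.p (S.x k i) (S.eps k i) * (|S.x (k + 1) i| - |S.x k i|) := by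
    rw [← Finset.sum_add_distrib]
    apply Finset.sum_le_sum
    intro i _
    have ha : 0 < |S.x k i| + S.eps k i := by
      have := S.heps_pos k i; have := abs_nonneg (S.x k i); linarith
    have hb : 0 ≤ |S.x (k + 1) i| + S.eps (k + 1) i := by
      have := S.heps_pos (k + 1) i; have := abs_nonneg (S.x (k + 1) i); linarith
    have htan := rpow_tangent S.hp0 S.hp1 ha hb
    have hw : wfun S.p (S.x k i) (S.eps k i) = S.p * (|S.x k i| + S.eps k i) ^ (S.p - 1) := rfl
    have hwpos := S.wpos k i
    have hde : |S.x (k + 1) i| + S.eps (k + 1) i - (|S.x k i| + S.eps k i)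
        ≤ |S.x (k + 1) i| - |S.x k i| := by
      have := S.eps_mono k i; linarith
    calc (|S.x (k + 1) i| + S.eps (k + 1) i) ^ S.p
        ≤ (|S.x k i| + S.eps k i) ^ S.p + S.p * (|S.x k i| + S.eps k i) ^ (S.p - 1)
            * (|S.x (k + 1) i| + S.eps (k + 1) i - (|S.x k i| + S.eps k i)) := htan
      _ ≤ (|S.x k i| + S.eps k i) ^ S.p
          + wfun S.p (S.x k i) (S.eps k i) * (|S.x (k + 1) i| - |S.x k i|) := by
          rw [hw]
          have := mul_le_mul_of_nonneg_left hde (le_of_lt hwpos)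
          rw [hw] at this
          linarith
  -- (iii) strong convexity first order at x k
  have hfo := sconv_first_order (S.hQ_diff k) (S.hQ_sconv k) (S.x k) (S.x (k + 1))
  rw [S.hQ_grad k] at hfo
  -- (iv) descent lemma for f
  have hdes := descent_lemma S.hf_diff S.hf_lip (S.x k) (S.x (k + 1))
  -- (ii) minimizer inequality at z = x k
  have hmin2 := S.G_min k (S.x k)
  have hnr : ‖S.x k - S.x (k + 1)‖ = ‖d‖ := by rw [hd, norm_sub_rev]
  rw [hnr] at hmin2
  simp only [IRL1.G] at hmin2
  simp only [IRL1.Feps]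
  have hlam := S.hlam
  have hmul := mul_le_mul_of_nonneg_left hsum (le_of_lt hlam)
  -- combine
  have hws : S.lam * (∑ i, (|S.x k i| + S.eps k i) ^ S.p
        + ∑ i, wfun S.p (S.x k i) (S.eps k i) * (|S.x (k + 1) i| - |S.x k i|))
      = S.lam * ∑ i, (|S.x k i| + S.eps k i) ^ S.p
        + (S.lam * ∑ i, wfun S.p (S.x k i) (S.eps k i) * |S.x (k + 1) i|
          - S.lam * ∑ i, wfun S.p (S.x k i) (S.eps k i) * |S.x k i|) := by
    rw [mul_add]
    congr 1
    rw [← mul_sub, ← Finset.sum_sub_distrib]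
    congr 1
    apply Finset.sum_congr rfl
    intro i _
    ring
  rw [hws] at hmul
  linarith [hmul, hfo, hdes, hmin2]

lemma real_rpow_add_le {x y q : ℝ} (hx : 0 ≤ x) (hy : 0 ≤ y) (hq : 0 ≤ q) (hq1 : q ≤ 1) :
    (x + y) ^ q ≤ x ^ q + y ^ q := by
  have h := NNReal.rpow_add_le_add_rpow (x.toNNReal) (y.toNNReal) hq hq1
  have hc : ((x.toNNReal + y.toNNReal : NNReal) : ℝ) = x + y := by
    simp [Real.coe_toNNReal x hx, Real.coe_toNNReal y hy]
  have := congrArg (fun t : NNReal => (t : ℝ)) (rfl : (x.toNNReal + y.toNNReal) ^ q = (x.toNNReal + y.toNNReal) ^ q)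
  calc (x + y) ^ q = (((x.toNNReal + y.toNNReal : NNReal) : ℝ)) ^ q := by rw [hc]
    _ = (((x.toNNReal + y.toNNReal) ^ q : NNReal) : ℝ) := by
        rw [← NNReal.coe_rpow]
    _ ≤ (((x.toNNReal ^ q + y.toNNReal ^ q : NNReal)) : ℝ) := by exact_mod_cast h
    _ = x ^ q + y ^ q := by
        rw [NNReal.coe_add, NNReal.coe_rpow, NNReal.coe_rpow,
          Real.coe_toNNReal x hx, Real.coe_toNNReal y hy]

lemma Fobj_le_Feps (z : EuclideanSpace ℝ (Fin n)) (e : Fin n → ℝ) (he : ∀ i, 0 ≤ e i) :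
    S.Fobj z ≤ S.Feps z e := by
  simp only [IRL1.Fobj, IRL1.Feps]
  have h : ∑ i, |z i| ^ S.p ≤ ∑ i, (|z i| + e i) ^ S.p := by
    apply Finset.sum_le_sum
    intro i _
    exact Real.rpow_le_rpow (abs_nonneg _) (by linarith [he i]) (le_of_lt S.hp0)
  nlinarith [S.hlam]

lemma Feps_antitone : Antitone (fun k => S.Feps (S.x k) (S.eps k)) := by
  apply antitone_nat_of_succ_le
  intro k
  have h := S.descent k
  have hc : 0 ≤ (S.M - S.Lf / 2) * ‖S.x (k + 1) - S.x k‖ ^ 2 := by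
    apply mul_nonneg (by linarith [S.hM]) (by positivity)
  linarith

lemma Feps_le_init (k : ℕ) : S.Feps (S.x k) (S.eps k) ≤ S.Feps (S.x 0) (S.eps 0) :=
  S.Feps_antitone (Nat.zero_le k)

lemma x_mem_level (k : ℕ) :
    S.x k ∈ {z : EuclideanSpace ℝ (Fin n) | S.Fobj z ≤ S.Feps (S.x 0) (S.eps 0)} := by
  have h1 := S.Fobj_le_Feps (S.x k) (S.eps k) (fun i => le_of_lt (S.heps_pos k i))
  exact le_trans h1 (S.Feps_le_init k)

lemma exists_R (hbdd : S.LevelBounded) :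
    ∃ R : ℝ, 0 ≤ R ∧ ∀ k, ‖S.x k‖ ≤ R := by
  obtain ⟨r, hr⟩ := hbdd.subset_closedBall (0 : EuclideanSpace ℝ (Fin n))
  refine ⟨max r 0, le_max_right _ _, fun k => ?_⟩
  have := hr (S.x_mem_level k)
  rw [Metric.mem_closedBall, dist_zero_right] at this
  exact le_trans this (le_max_left _ _)

lemma Feps_bddBelow (hbdd : S.LevelBounded) :
    ∃ C : ℝ, ∀ k, C ≤ S.Feps (S.x k) (S.eps k) := by
  obtain ⟨R, hR0, hR⟩ := S.exists_R hbdd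
  obtain ⟨zm, hzm, hzmin⟩ := (isCompact_closedBall (0 : EuclideanSpace ℝ (Fin n)) R).exists_isMinOn
    ⟨S.x 0, by simpa [Metric.mem_closedBall, dist_zero_right] using hR 0⟩
    (S.hf_diff.continuous.continuousOn)
  refine ⟨S.f zm, fun k => ?_⟩
  have h1 : S.f zm ≤ S.f (S.x k) := hzmin (by simpa [Metric.mem_closedBall, dist_zero_right] using hR k)
  have h2 : 0 ≤ S.lam * ∑ i, (|S.x k i| + S.eps k i) ^ S.p := by
    apply mul_nonneg (le_of_lt S.hlam)
    apply Finset.sum_nonneg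
    intro i _
    exact Real.rpow_nonneg (by have := S.heps_pos k i; have := abs_nonneg (S.x k i); linarith) _
  simp only [IRL1.Feps]
  linarith

lemma Feps_tendsto (hbdd : S.LevelBounded) :
    ∃ ℓ : ℝ, Tendsto (fun k => S.Feps (S.x k) (S.eps k)) atTop (𝓝 ℓ) := by
  obtain ⟨C, hC⟩ := S.Feps_bddBelow hbdd
  exact ⟨_, tendsto_atTop_ciInf S.Feps_antitone ⟨C, fun y ⟨k, hk⟩ => hk ▸ hC k⟩⟩

lemma step_tendsto (hbdd : S.LevelBounded) :
    Tendsto (fun k => ‖S.x (k + 1) - S.x k‖) atTop (𝓝 0) := by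
  obtain ⟨ℓ, hℓ⟩ := S.Feps_tendsto hbdd
  have hshift : Tendsto (fun k => S.Feps (S.x (k + 1)) (S.eps (k + 1))) atTop (𝓝 ℓ) :=
    hℓ.comp (tendsto_add_atTop_nat 1)
  have hdiff : Tendsto (fun k => S.Feps (S.x k) (S.eps k)
      - S.Feps (S.x (k + 1)) (S.eps (k + 1))) atTop (𝓝 0) := by
    have := hℓ.sub hshift
    simpa using this
  have hc : 0 < S.M - S.Lf / 2 := by linarith [S.hM]
  have hsq : Tendsto (fun k => ‖S.x (k + 1) - S.x k‖ ^ 2) atTop (𝓝 0) := by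
    apply tendsto_of_tendsto_of_tendsto_of_le_of_le (g := fun _ => (0:ℝ))
      (h := fun k => (S.Feps (S.x k) (S.eps k) - S.Feps (S.x (k + 1)) (S.eps (k + 1))) / (S.M - S.Lf / 2))
      tendsto_const_nhds
    · simpa using hdiff.div_const (S.M - S.Lf / 2)
    · intro k; positivity
    · intro k
      rw [le_div_iff₀ hc]
      have := S.descent k
      linarith
  have := (Real.continuous_sqrt.tendsto 0).comp hsq
  simp only [Real.sqrt_zero] at this
  refine this.congr (fun k => ?_)
  simp [Function.comp, Real.sqrt_sq (norm_nonneg _)]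

lemma eps_le_geom (k : ℕ) (i : Fin n) : S.eps k i ≤ S.mu ^ k * S.eps 0 i := by
  induction k with
  | zero => simp
  | succ m ih =>
    have h1 := S.heps_dec m i
    have h2 : S.mu * S.eps m i ≤ S.mu * (S.mu ^ m * S.eps 0 i) :=
      mul_le_mul_of_nonneg_left ih (le_of_lt S.hmu0)
    calc S.eps (m + 1) i ≤ S.mu * S.eps m i := h1
      _ ≤ S.mu * (S.mu ^ m * S.eps 0 i) := h2
      _ = S.mu ^ (m + 1) * S.eps 0 i := by ring

lemma eps_tendsto (i : Fin n) : Tendsto (fun k => S.eps k i) atTop (𝓝 0) := by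
  apply tendsto_of_tendsto_of_tendsto_of_le_of_le (g := fun _ => (0:ℝ))
    (h := fun k => S.mu ^ k * S.eps 0 i) tendsto_const_nhds
  · have := (tendsto_pow_atTop_nhds_zero_of_lt_one (le_of_lt S.hmu0) S.hmu1).mul_const (S.eps 0 i)
    simpa using this
  · exact fun k => le_of_lt (S.heps_pos k i)
  · exact fun k => S.eps_le_geom k i

/-- First-order optimality of the subproblem in coordinate `i`. -/
lemma coord_opt (k : ℕ) (i : Fin n) (hne : S.x (k + 1) i ≠ 0) :
    S.lam * wfun S.p (S.x k i) (S.eps k i) ≤ ‖gradient (S.Q k) (S.x (k + 1))‖ := by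
  classical
  set e : EuclideanSpace ℝ (Fin n) := EuclideanSpace.single i (1:ℝ) with he
  set t₀ : ℝ := S.x (k + 1) i with ht₀
  set y : EuclideanSpace ℝ (Fin n) := S.x (k + 1) - t₀ • e with hy
  set u : ℝ → EuclideanSpace ℝ (Fin n) := fun t => y + t • e with hu
  have hut₀ : u t₀ = S.x (k + 1) := by
    simp only [hu, hy, sub_add_cancel]
  have hui : ∀ t, u t i = t := by
    intro t
    have : u t i = (S.x (k + 1) i - t₀ * (EuclideanSpace.single i (1:ℝ) i))
        + t * (EuclideanSpace.single i (1:ℝ) i) := rfl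
    rw [this, EuclideanSpace.single_apply]
    simp [ht₀]
  have huj : ∀ t, ∀ j, j ≠ i → u t j = S.x (k + 1) j := by
    intro t j hj
    have : u t j = (S.x (k + 1) j - t₀ * (EuclideanSpace.single i (1:ℝ) j))
        + t * (EuclideanSpace.single i (1:ℝ) j) := rfl
    rw [this, EuclideanSpace.single_apply]
    simp [if_neg hj]
  set w : ℝ := wfun S.p (S.x k i) (S.eps k i) with hw
  set c0 : ℝ := ∑ j ∈ Finset.univ.erase i, wfun S.p (S.x k j) (S.eps k j) * |S.x (k + 1) j|
    with hc0
  set ψ : ℝ → ℝ := fun t => S.Q k (u t) + S.lam * (w * |t| + c0) with hψ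
  have hψG : ∀ t, ψ t = S.G k (u t) := by
    intro t
    simp only [hψ, IRL1.G]
    congr 1
    congr 1
    have hsplit : ∑ j, wfun S.p (S.x k j) (S.eps k j) * |u t j|
        = wfun S.p (S.x k i) (S.eps k i) * |u t i|
          + ∑ j ∈ Finset.univ.erase i, wfun S.p (S.x k j) (S.eps k j) * |u t j| :=
      (Finset.add_sum_erase _ _ (Finset.mem_univ i)).symm
    rw [hsplit, hui]
    congr 1
    apply Finset.sum_congr rfl
    intro j hj
    rw [huj t j (Finset.ne_of_mem_erase hj)]
  have hGmin : ∀ z, S.G k (S.x (k + 1)) ≤ S.G k z := fun z => S.hmin k z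
  have hloc : IsLocalMin ψ t₀ := by
    apply Filter.Eventually.of_forall
    intro t
    rw [hψG, hψG, hut₀]
    exact hGmin (u t)
  -- derivative of ψ at t₀
  have hQd : HasDerivAt (fun t => S.Q k (u t)) ⟪gradient (S.Q k) (S.x (k + 1)), e⟫_ℝ t₀ := by
    have := line_hasDerivAt (y := y) (d := e) (S.hQ_diff k) t₀
    rw [show y + t₀ • e = S.x (k + 1) from hut₀] at this
    exact this
  have habs : HasDerivAt (fun t : ℝ => |t|) ((SignType.sign t₀ : ℝ)) t₀ := hasDerivAt_abs hne
  have hψd : HasDerivAt ψ (⟪gradient (S.Q k) (S.x (k + 1)), e⟫_ℝ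
      + S.lam * (w * (SignType.sign t₀ : ℝ))) t₀ := by
    have h2 : HasDerivAt (fun t : ℝ => S.lam * (w * |t| + c0))
        (S.lam * (w * (SignType.sign t₀ : ℝ))) t₀ := by
      have := ((habs.const_mul w).add_const c0).const_mul S.lam
      simpa using this
    exact hQd.add h2
  have hzero := hloc.deriv_eq_zero
  rw [hψd.deriv] at hzero
  set I := ⟪gradient (S.Q k) (S.x (k + 1)), e⟫_ℝ with hI
  have hwpos : 0 < w := S.wpos k i
  have hlamw : 0 < S.lam * w := mul_pos S.hlam hwpos
  have hip : |I| = S.lam * w := by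
    rcases lt_trichotomy t₀ 0 with h | h | h
    · rw [sign_neg h] at hzero
      norm_num at hzero
      rw [abs_of_nonneg (by nlinarith : (0:ℝ) ≤ I)]
      linarith
    · exact absurd h hne
    · rw [sign_pos h] at hzero
      norm_num at hzero
      rw [abs_of_nonpos (by nlinarith : I ≤ (0:ℝ))]
      linarith
  have hcs : |I| ≤ ‖gradient (S.Q k) (S.x (k + 1))‖ * ‖e‖ :=
    abs_real_inner_le_norm _ _
  rw [he, EuclideanSpace.norm_single] at hcs
  simp only [norm_one, mul_one] at hcs
  rw [hip] at hcs
  exact hcs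

lemma grad_bound (hbdd : S.LevelBounded) :
    ∃ Gb : ℝ, 0 < Gb ∧ ∀ k, ‖gradient (S.Q k) (S.x (k + 1))‖ ≤ Gb := by
  obtain ⟨R, hR0, hR⟩ := S.exists_R hbdd
  have hb1 : (0:ℝ) ≤ |S.L| * (2 * R) := mul_nonneg (abs_nonneg _) (by linarith)
  have hb2 : (0:ℝ) ≤ S.Lf * R := mul_nonneg S.hLf hR0
  refine ⟨|S.L| * (2 * R) + (S.Lf * R + ‖gradient S.f 0‖) + 1,
    by nlinarith [norm_nonneg (gradient S.f 0)], fun k => ?_⟩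
  have h1 : ‖gradient (S.Q k) (S.x (k + 1)) - gradient (S.Q k) (S.x k)‖
      ≤ S.L * ‖S.x (k + 1) - S.x k‖ := S.hQ_lip k _ _
  have hd2R : ‖S.x (k + 1) - S.x k‖ ≤ 2 * R := by
    calc ‖S.x (k + 1) - S.x k‖ ≤ ‖S.x (k + 1)‖ + ‖S.x k‖ := norm_sub_le _ _
      _ ≤ 2 * R := by linarith [hR (k + 1), hR k]
  have h1' : ‖gradient (S.Q k) (S.x (k + 1)) - gradient (S.Q k) (S.x k)‖ ≤ |S.L| * (2 * R) := by
    calc ‖gradient (S.Q k) (S.x (k + 1)) - gradient (S.Q k) (S.x k)‖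
        ≤ S.L * ‖S.x (k + 1) - S.x k‖ := h1
      _ ≤ |S.L| * ‖S.x (k + 1) - S.x k‖ :=
          mul_le_mul_of_nonneg_right (le_abs_self _) (norm_nonneg _)
      _ ≤ |S.L| * (2 * R) := mul_le_mul_of_nonneg_left hd2R (abs_nonneg _)
  have h2 : ‖gradient (S.Q k) (S.x k)‖ ≤ S.Lf * R + ‖gradient S.f 0‖ := by
    rw [S.hQ_grad k]
    calc ‖gradient S.f (S.x k)‖
        ≤ ‖gradient S.f (S.x k) - gradient S.f 0‖ + ‖gradient S.f 0‖ := by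
          have := norm_add_le (gradient S.f (S.x k) - gradient S.f 0) (gradient S.f 0)
          simpa using this
      _ ≤ S.Lf * ‖S.x k - 0‖ + ‖gradient S.f 0‖ := by linarith [S.hf_lip (S.x k) 0]
      _ ≤ S.Lf * R + ‖gradient S.f 0‖ := by
          have : ‖S.x k - (0 : EuclideanSpace ℝ (Fin n))‖ = ‖S.x k‖ := by simp
          rw [this]
          have := mul_le_mul_of_nonneg_left (hR k) S.hLf
          linarith
  calc ‖gradient (S.Q k) (S.x (k + 1))‖
      ≤ ‖gradient (S.Q k) (S.x (k + 1)) - gradient (S.Q k) (S.x k)‖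
        + ‖gradient (S.Q k) (S.x k)‖ := by
        have := norm_add_le (gradient (S.Q k) (S.x (k + 1)) - gradient (S.Q k) (S.x k))
          (gradient (S.Q k) (S.x k))
        simpa using this
    _ ≤ |S.L| * (2 * R) + (S.Lf * R + ‖gradient S.f 0‖) := by linarith
    _ ≤ |S.L| * (2 * R) + (S.Lf * R + ‖gradient S.f 0‖) + 1 := by linarith

lemma threshold (hbdd : S.LevelBounded) :
    ∃ c : ℝ, 0 < c ∧ ∀ k i, S.x (k + 1) i ≠ 0 → c ≤ |S.x k i| + S.eps k i := by
  obtain ⟨Gb, hGb0, hGb⟩ := S.grad_bound hbdd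
  set K : ℝ := Gb / (S.lam * S.p) with hK
  have hKpos : 0 < K := div_pos hGb0 (mul_pos S.hlam S.hp0)
  refine ⟨K ^ (1 / (S.p - 1)), Real.rpow_pos_of_pos hKpos _, fun k i hne => ?_⟩
  have hopt := S.coord_opt k i hne
  have hbd := le_trans hopt (hGb k)
  set a : ℝ := |S.x k i| + S.eps k i with ha
  have hapos : 0 < a := by
    have := S.heps_pos k i; have := abs_nonneg (S.x k i); rw [ha]; linarith
  have hw : wfun S.p (S.x k i) (S.eps k i) = S.p * a ^ (S.p - 1) := rfl
  rw [hw] at hbd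
  have hstep : a ^ (S.p - 1) ≤ K := by
    rw [hK, le_div_iff₀ (mul_pos S.hlam S.hp0)]
    nlinarith [hbd]
  have hexp : (a ^ (S.p - 1)) ^ (1 / (S.p - 1)) = a := by
    rw [← Real.rpow_mul (le_of_lt hapos), mul_one_div,
      div_self (by intro h0; have := S.hp1; nlinarith : S.p - 1 ≠ 0), Real.rpow_one]
  calc K ^ (1 / (S.p - 1)) ≤ (a ^ (S.p - 1)) ^ (1 / (S.p - 1)) := by
        apply Real.rpow_le_rpow_of_nonpos (Real.rpow_pos_of_pos hapos _) hstep
        apply div_nonpos_of_nonneg_of_nonpos zero_le_one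
        linarith [S.hp1]
    _ = a := hexp

lemma coord_le_norm (z : EuclideanSpace ℝ (Fin n)) (i : Fin n) : |z i| ≤ ‖z‖ := by
  rw [EuclideanSpace.norm_eq]
  have h1 : |z i| = Real.sqrt (‖z i‖ ^ 2) := by
    rw [Real.sqrt_sq (norm_nonneg _), Real.norm_eq_abs]
  rw [h1]
  apply Real.sqrt_le_sqrt
  exact Finset.single_le_sum (f := fun j => ‖z j‖ ^ 2) (fun j _ => by positivity)
    (Finset.mem_univ i)

lemma coord_tendsto {a : EuclideanSpace ℝ (Fin n)} {u : ℕ → EuclideanSpace ℝ (Fin n)}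
    (hlim : Tendsto u atTop (𝓝 a)) (i : Fin n) :
    Tendsto (fun m => u m i) atTop (𝓝 (a i)) := by
  rw [tendsto_iff_dist_tendsto_zero] at hlim ⊢
  apply tendsto_of_tendsto_of_tendsto_of_le_of_le (g := fun _ => (0:ℝ))
    (h := fun m => dist (u m) a) tendsto_const_nhds hlim
  · exact fun m => dist_nonneg
  · intro m
    simp only [Real.dist_eq, dist_eq_norm]
    exact coord_le_norm (u m - a) i

/-- eventual sign pattern of each coordinate -/
lemma ev_sign (hbdd : S.LevelBounded) (i : Fin n) :
    ∃ s γ : ℝ, 0 < γ ∧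
      (s = 0 → ∀ᶠ k in atTop, S.x k i = 0) ∧
      (s ≠ 0 → (s = 1 ∨ s = -1) ∧
        ∀ᶠ k in atTop, Real.sign (S.x k i) = s ∧ γ ≤ S.x k i * s) := by
  obtain ⟨c, hc0, hthr⟩ := S.threshold hbdd
  -- uniform epsilon bound
  have hepsN : ∀ᶠ k in atTop, ∀ j : Fin n, S.eps k j < c / 2 := by
    set B : ℝ := (∑ j, S.eps 0 j) + 1 with hB
    have hBpos : 0 < B := by
      have : 0 ≤ ∑ j, S.eps 0 j :=
        Finset.sum_nonneg (fun j _ => le_of_lt (S.heps_pos 0 j))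
      rw [hB]; linarith
    have hgeom : Tendsto (fun k => S.mu ^ k * B) atTop (𝓝 0) := by
      have := (tendsto_pow_atTop_nhds_zero_of_lt_one (le_of_lt S.hmu0) S.hmu1).mul_const B
      simpa using this
    have hev := hgeom.eventually (eventually_lt_nhds (show (0:ℝ) < c / 2 by linarith))
    refine hev.mono (fun k hk j => ?_)
    have h1 : S.eps k j ≤ S.mu ^ k * S.eps 0 j := S.eps_le_geom k j
    have h2 : S.eps 0 j ≤ B := by
      rw [hB]
      have := Finset.single_le_sum (f := fun j => S.eps 0 j)
        (fun j _ => le_of_lt (S.heps_pos 0 j)) (Finset.mem_univ j)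
      linarith
    have h3 : S.mu ^ k * S.eps 0 j ≤ S.mu ^ k * B :=
      mul_le_mul_of_nonneg_left h2 (pow_nonneg (le_of_lt S.hmu0) k)
    exact lt_of_le_of_lt (le_trans h1 h3) hk
  have hstepN : ∀ᶠ k in atTop, ‖S.x (k + 1) - S.x k‖ < c / 8 :=
    (S.step_tendsto hbdd).eventually (eventually_lt_nhds (show (0:ℝ) < c / 8 by linarith))
  obtain ⟨N₁, hN₁⟩ := eventually_atTop.mp hepsN
  obtain ⟨N₂, hN₂⟩ := eventually_atTop.mp hstepN
  set N₀ := max N₁ N₂ with hN₀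
  -- if the next iterate is nonzero, the current coordinate is large
  have hA : ∀ k, N₀ ≤ k → S.x (k + 1) i ≠ 0 → c / 2 ≤ |S.x k i| := by
    intro k hk hne
    have h1 := hthr k i hne
    have h2 := hN₁ k (le_trans (le_max_left _ _) hk) i
    linarith
  -- nonzero coordinates stay large and keep their sign
  have hB' : ∀ k, N₀ ≤ k → S.x (k + 1) i ≠ 0 →
      3 * c / 8 ≤ |S.x (k + 1) i| ∧ Real.sign (S.x (k + 1) i) = Real.sign (S.x k i) := by
    intro k hk hne
    have h1 := hA k hk hne
    have h2 : |S.x (k + 1) i - S.x k i| ≤ ‖S.x (k + 1) - S.x k‖ :=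
      coord_le_norm (S.x (k + 1) - S.x k) i
    have h3 := hN₂ k (le_trans (le_max_right _ _) hk)
    have h4 : |S.x (k + 1) i - S.x k i| < c / 8 := lt_of_le_of_lt h2 h3
    rw [abs_sub_lt_iff] at h4
    rcases le_abs.mp h1 with h5 | h5
    · -- positive case
      have hxk : 0 < S.x k i := by linarith
      have hxk1 : 3 * c / 8 ≤ S.x (k + 1) i := by linarith [h4.2]
      constructor
      · rw [abs_of_pos (by linarith : 0 < S.x (k + 1) i)]; exact hxk1
      · rw [Real.sign_of_pos (by linarith : 0 < S.x (k + 1) i), Real.sign_of_pos hxk]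
    · -- negative case
      have hxk : S.x k i < 0 := by linarith
      have hxk1 : S.x (k + 1) i ≤ -(3 * c / 8) := by linarith [h4.1]
      constructor
      · rw [abs_of_neg (by linarith : S.x (k + 1) i < 0)]; linarith
      · rw [Real.sign_of_neg (by linarith : S.x (k + 1) i < 0), Real.sign_of_neg hxk]
  by_cases hcase : ∃ m, N₀ ≤ m ∧ S.x (m + 1) i = 0
  · obtain ⟨m, hm, hz⟩ := hcase
    have hall : ∀ k, m + 1 ≤ k → S.x k i = 0 := by
      intro k hk
      induction k, hk using Nat.le_induction with
      | base => exact hz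
      | succ k hk ih =>
        by_contra hne
        have := hA k (by omega) hne
        rw [ih] at this
        simp at this
        linarith
    exact ⟨0, 1, one_pos, fun _ => eventually_atTop.mpr ⟨m + 1, hall⟩,
      fun hs => absurd rfl hs⟩
  · push_neg at hcase
    have hne : ∀ m, N₀ ≤ m → S.x (m + 1) i ≠ 0 := hcase
    set s : ℝ := Real.sign (S.x (N₀ + 1) i) with hs
    have hsne : s ≠ 0 := by
      rw [hs]
      intro h0
      exact hne N₀ (le_refl _) (Real.sign_eq_zero_iff.mp h0)
    have hsgn : ∀ k, N₀ ≤ k → Real.sign (S.x (k + 1) i) = s := by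
      intro k hk
      induction k, hk using Nat.le_induction with
      | base => rfl
      | succ k hk ih =>
        have h1 := (hB' (k + 1) (by omega) (hne (k + 1) (by omega))).2
        rw [h1, ih]
    have hval : s = 1 ∨ s = -1 := by
      rcases lt_trichotomy (S.x (N₀ + 1) i) 0 with h | h | h
      · right; rw [hs, Real.sign_of_neg h]
      · exact absurd h (hne N₀ (le_refl _))
      · left; rw [hs, Real.sign_of_pos h]
    refine ⟨s, 3 * c / 8, by linarith, fun h0 => absurd h0 hsne, fun _ => ⟨hval, ?_⟩⟩
    rw [eventually_atTop]
    refine ⟨N₀ + 1, fun k hk => ?_⟩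
    obtain ⟨j, rfl⟩ : ∃ j, k = j + 1 := ⟨k - 1, by omega⟩
    have hj : N₀ ≤ j := by omega
    have h1 := (hB' j hj (hne j hj)).1
    have h2 := hsgn j hj
    refine ⟨h2, ?_⟩
    rcases lt_trichotomy (S.x (j + 1) i) 0 with h | h | h
    · have : s = -1 := by rw [← h2, Real.sign_of_neg h]
      rw [this]
      rw [abs_of_neg h] at h1
      linarith
    · exact absurd h (hne j hj)
    · have : s = 1 := by rw [← h2, Real.sign_of_pos h]
      rw [this]
      rw [abs_of_pos h] at h1
      linarith

lemma Fobj_continuous : Continuous S.Fobj := by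
  apply S.hf_diff.continuous.add
  apply continuous_const.mul
  apply continuous_finset_sum
  intro i _
  exact (Real.continuous_rpow_const (le_of_lt S.hp0)).comp
    (continuous_abs.comp (EuclideanSpace.proj i).continuous)

lemma Fobj_cluster_const (hbdd : S.LevelBounded) :
    ∃ ℓ : ℝ, ∀ a ∈ clusterSet S.x, S.Fobj a = ℓ := by
  obtain ⟨ℓ, hℓ⟩ := S.Feps_tendsto hbdd
  have hup : ∀ k, S.Fobj (S.x k) ≤ S.Feps (S.x k) (S.eps k) :=
    fun k => S.Fobj_le_Feps (S.x k) (S.eps k) (fun i => le_of_lt (S.heps_pos k i))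
  have hlow : ∀ k, S.Feps (S.x k) (S.eps k)
      ≤ S.Fobj (S.x k) + S.lam * ∑ i, (S.eps k i) ^ S.p := by
    intro k
    simp only [IRL1.Feps, IRL1.Fobj]
    have hsum : ∑ i, (|S.x k i| + S.eps k i) ^ S.p
        ≤ ∑ i, |S.x k i| ^ S.p + ∑ i, (S.eps k i) ^ S.p := by
      rw [← Finset.sum_add_distrib]
      apply Finset.sum_le_sum
      intro i _
      exact real_rpow_add_le (abs_nonneg _) (le_of_lt (S.heps_pos k i))
        (le_of_lt S.hp0) (le_of_lt S.hp1)
    have := mul_le_mul_of_nonneg_left hsum (le_of_lt S.hlam)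
    rw [mul_add] at this
    linarith
  have hE : Tendsto (fun k => S.lam * ∑ i, (S.eps k i) ^ S.p) atTop (𝓝 0) := by
    have hterm : ∀ i : Fin n, Tendsto (fun k => (S.eps k i) ^ S.p) atTop (𝓝 0) := by
      intro i
      have h1 := ((Real.continuous_rpow_const (le_of_lt S.hp0)).tendsto 0).comp
        (S.eps_tendsto i)
      rw [Real.zero_rpow (ne_of_gt S.hp0)] at h1
      exact h1
    have hsum : Tendsto (fun k => ∑ i, (S.eps k i) ^ S.p) atTop (𝓝 0) := by
      have := tendsto_finset_sum Finset.univ (fun i _ => hterm i)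
      simpa using this
    have := hsum.const_mul S.lam
    simpa using this
  have hFobj : Tendsto (fun k => S.Fobj (S.x k)) atTop (𝓝 ℓ) := by
    apply tendsto_of_tendsto_of_tendsto_of_le_of_le
      (g := fun k => S.Feps (S.x k) (S.eps k) - S.lam * ∑ i, (S.eps k i) ^ S.p)
      (h := fun k => S.Feps (S.x k) (S.eps k))
    · simpa using hℓ.sub hE
    · exact hℓ
    · intro k; dsimp only; linarith [hlow k]
    · exact hup
  refine ⟨ℓ, ?_⟩
  rintro a ⟨φ, hφ, hlim⟩
  have h1 : Tendsto (fun m => S.Fobj (S.x (φ m))) atTop (𝓝 (S.Fobj a)) :=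
    (S.Fobj_continuous.tendsto a).comp hlim
  have h2 : Tendsto (fun m => S.Fobj (S.x (φ m))) atTop (𝓝 ℓ) :=
    hFobj.comp hφ.tendsto_atTop
  exact tendsto_nhds_unique h1 h2

lemma sign_cluster (hbdd : S.LevelBounded) (i : Fin n) :
    ∃ s : ℝ, ∀ z ∈ clusterSet S.x, Real.sign (z i) = s := by
  obtain ⟨s, γ, hγ, hzero, hnz⟩ := S.ev_sign hbdd i
  refine ⟨s, ?_⟩
  rintro z ⟨φ, hφ, hlim⟩
  have hct : Tendsto (fun m => S.x (φ m) i) atTop (𝓝 (z i)) := coord_tendsto hlim i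
  by_cases hs : s = 0
  · have hev : ∀ᶠ m in atTop, S.x (φ m) i = 0 := hφ.tendsto_atTop.eventually (hzero hs)
    have hz : (0:ℝ) = z i :=
      tendsto_nhds_unique (tendsto_const_nhds.congr' (hev.mono fun m hm => hm.symm)) hct
    rw [← hz, Real.sign_zero, hs]
  · obtain ⟨hval, hev⟩ := hnz hs
    have hev2 := hφ.tendsto_atTop.eventually hev
    have hmul : Tendsto (fun m => S.x (φ m) i * s) atTop (𝓝 (z i * s)) := hct.mul_const s
    have hzi : γ ≤ z i * s := ge_of_tendsto hmul (hev2.mono fun m h => h.2)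
    rcases hval with h1 | h1
    · rw [h1] at hzi ⊢
      rw [mul_one] at hzi
      exact Real.sign_of_pos (by linarith)
    · rw [h1] at hzi ⊢
      exact Real.sign_of_neg (by nlinarith)

end IRL1

/-- In the IRL1 setting with bounded level set, either `{x^k}`
converges (unique limit point), or the set `Ω` of its limit points is a compact
connected set all of whose elements have the same sign pattern, on which the
objective `F(x) = f(x) + λ Σᵢ |xᵢ|^p` is constant. -/
theorem stmt13 {n : ℕ} (S : IRL1 n) (hbdd : S.LevelBounded) :
    (∃ xstar : EuclideanSpace ℝ (Fin n), Tendsto S.x atTop (nhds xstar)) ∨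
    (IsCompact (clusterSet S.x) ∧ IsConnected (clusterSet S.x) ∧
      (∀ a ∈ clusterSet S.x, ∀ b ∈ clusterSet S.x, ∀ i : Fin n,
        Real.sign (a i) = Real.sign (b i)) ∧
      (∀ a ∈ clusterSet S.x, ∀ b ∈ clusterSet S.x, S.Fobj a = S.Fobj b)) := by
  right
  obtain ⟨R, hR0, hR⟩ := S.exists_R hbdd
  have hstep' : Tendsto (fun k => dist (S.x (k + 1)) (S.x k)) atTop (𝓝 0) := by
    have := S.step_tendsto hbdd
    simpa [dist_eq_norm] using this
  refine ⟨clusterSet_compact hR,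
    ⟨clusterSet_nonempty hR, clusterSet_preconnected hR hstep'⟩, ?_, ?_⟩
  · intro a ha b hb i
    obtain ⟨s, hsign⟩ := S.sign_cluster hbdd i
    rw [hsign a ha, hsign b hb]
  · intro a ha b hb
    obtain ⟨ℓ, hℓ⟩ := S.Fobj_cluster_const hbdd
    rw [hℓ a ha, hℓ b hb]
end

section
/- In the IRL1 setting with the SR update rule and level-set boundedness, for each coordinate i: if ε_i^k → 0 as k → ∞, then liminf_{k→∞} |x_i^k| > 0. -/
open Filter Topology

/-- The IRL1 setting with the "smart reweighting" (SR) ε-update rule: fixed data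
`p ∈ (0,1)`, `λ > 0`, `μ ∈ (0,1)`, a differentiable `f` with `Lf`-Lipschitz gradient
(`Lf ≥ 0`), iterates `x^k`, positive parameters `ε^k` updated by the SR rule
(`ε_i^{k+1} = ε_i^k` if `x_i^{k+1} = 0`, `ε_i^{k+1} ≤ μ ε_i^k` if `x_i^{k+1} ≠ 0`),
and for each `k` a differentiable model `Q_k` with `∇Q_k(x^k) = ∇f(x^k)`,
`M`-strongly convex with `M > Lf/2` (meaning `z ↦ Q_k z - (M/2)‖z‖²` is convex),
`∇Q_k` `L`-Lipschitz, such that `x^{k+1}` globally minimizes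
`G(·; x^k, ε^k) = Q_k(·) + λ Σᵢ w(xᵢ^k, εᵢ^k)|·ᵢ|`. -/
structure IRL1SR (n : ℕ) where
  p : ℝ
  lam : ℝ
  mu : ℝ
  Lf : ℝ
  M : ℝ
  L : ℝ
  f : EuclideanSpace ℝ (Fin n) → ℝ
  x : ℕ → EuclideanSpace ℝ (Fin n)
  eps : ℕ → Fin n → ℝ
  Q : ℕ → EuclideanSpace ℝ (Fin n) → ℝ
  hp0 : 0 < p
  hp1 : p < 1
  hlam : 0 < lam
  hmu0 : 0 < mu
  hmu1 : mu < 1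
  hLf : 0 ≤ Lf
  hM : Lf / 2 < M
  hf_diff : Differentiable ℝ f
  hf_lip : ∀ a b, ‖gradient f a - gradient f b‖ ≤ Lf * ‖a - b‖
  heps_pos : ∀ k i, 0 < eps k i
  heps_SR_zero : ∀ k i, x (k + 1) i = 0 → eps (k + 1) i = eps k i
  heps_SR_nonzero : ∀ k i, x (k + 1) i ≠ 0 → eps (k + 1) i ≤ mu * eps k i
  hQ_diff : ∀ k, Differentiable ℝ (Q k)
  hQ_grad : ∀ k, gradient (Q k) (x k) = gradient f (x k)
  hQ_sconv : ∀ k, ConvexOn ℝ Set.univ (fun z => Q k z - M / 2 * ‖z‖ ^ 2)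
  hQ_lip : ∀ k a b, ‖gradient (Q k) a - gradient (Q k) b‖ ≤ L * ‖a - b‖
  hmin : ∀ k, ∀ z : EuclideanSpace ℝ (Fin n),
    Q k (x (k + 1)) + lam * ∑ i, wfun p (x k i) (eps k i) * |x (k + 1) i|
      ≤ Q k z + lam * ∑ i, wfun p (x k i) (eps k i) * |z i|

/-- The smoothed objective `F(x, ε) = f(x) + λ Σᵢ (|xᵢ| + εᵢ)^p`. -/
noncomputable def IRL1SR.Feps {n : ℕ} (S : IRL1SR n)
    (z : EuclideanSpace ℝ (Fin n)) (e : Fin n → ℝ) : ℝ :=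
  S.f z + S.lam * ∑ i, (|z i| + e i) ^ S.p

/-- The objective `F(x) = f(x) + λ Σᵢ |xᵢ|^p`. -/
noncomputable def IRL1SR.Fobj {n : ℕ} (S : IRL1SR n) (z : EuclideanSpace ℝ (Fin n)) : ℝ :=
  S.f z + S.lam * ∑ i, |z i| ^ S.p

/-- The level set `{x : F(x) ≤ F(x⁰, ε⁰)}` is bounded. -/
def IRL1SR.LevelBounded {n : ℕ} (S : IRL1SR n) : Prop :=
  Bornology.IsBounded {z : EuclideanSpace ℝ (Fin n) | S.Fobj z ≤ S.Feps (S.x 0) (S.eps 0)}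

set_option maxHeartbeats 1000000
open scoped RealInnerProductSpace

section Helpers

variable {E : Type*} [NormedAddCommGroup E] [InnerProductSpace ℝ E] [CompleteSpace E]

lemma hasDerivAt_line (φ : E → ℝ) (y v : E) (t : ℝ) (hφ : DifferentiableAt ℝ φ (y + t • v)) :
    HasDerivAt (fun s : ℝ => φ (y + s • v)) ⟪gradient φ (y + t • v), v⟫ t := by
  have hline : HasDerivAt (fun s : ℝ => y + s • v) v t := by
    simpa using ((hasDerivAt_id t).smul_const v).const_add y
  have hgrad := hφ.hasGradientAt.hasFDerivAt
  have h := hgrad.comp_hasDerivAt t hline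
  simpa [InnerProductSpace.toDual_apply_apply, Function.comp_def] using h

lemma convex_tangent_le (φ : E → ℝ) (hconv : ConvexOn ℝ Set.univ φ)
    (hdiff : Differentiable ℝ φ) (y z : E) :
    φ y + ⟪gradient φ y, z - y⟫ ≤ φ z := by
  set v := z - y with hv
  have hg : ∀ t : ℝ, HasDerivAt (fun s => φ (y + s • v)) ⟪gradient φ (y + t • v), v⟫ t :=
    fun t => hasDerivAt_line φ y v t (hdiff _)
  have gconv : ConvexOn ℝ Set.univ (fun s : ℝ => φ (y + s • v)) := by
    have h := hconv.comp_affineMap (AffineMap.lineMap y z)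
    have heq : (φ ∘ (AffineMap.lineMap y z : ℝ →ᵃ[ℝ] E)) = fun s : ℝ => φ (y + s • v) := by
      funext s
      simp only [Function.comp_apply, AffineMap.lineMap_apply_module, hv]
      congr 1
      module
    rw [heq] at h
    simpa using h
  have hslope := gconv.le_slope_of_hasDerivAt (Set.mem_univ (0:ℝ)) (Set.mem_univ (1:ℝ))
    one_pos (hg 0)
  rw [slope_def_field] at hslope
  simp only [zero_smul, add_zero, one_smul, sub_zero, div_one] at hslope
  have : y + v = z := by rw [hv]; abel
  rw [this] at hslope
  linarith

lemma convexOn_of_monotone_gradient (φ : E → ℝ) (hdiff : Differentiable ℝ φ)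
    (hmono : ∀ a b : E, 0 ≤ ⟪gradient φ a - gradient φ b, a - b⟫) :
    ConvexOn ℝ Set.univ φ := by
  refine ⟨convex_univ, ?_⟩
  intro x _ y _ a b ha hb hab
  set v := y - x with hv
  have hg : ∀ t : ℝ, HasDerivAt (fun s => φ (x + s • v)) ⟪gradient φ (x + t • v), v⟫ t :=
    fun t => hasDerivAt_line φ x v t (hdiff _)
  have gdiff : Differentiable ℝ (fun s : ℝ => φ (x + s • v)) := fun t => (hg t).differentiableAt
  have hderiv : deriv (fun s : ℝ => φ (x + s • v)) = fun t => ⟪gradient φ (x + t • v), v⟫ :=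
    funext fun t => (hg t).deriv
  have hmono' : Monotone (deriv (fun s : ℝ => φ (x + s • v))) := by
    rw [hderiv]
    intro s t hst
    rcases eq_or_lt_of_le hst with rfl | h
    · exact le_rfl
    have h0 := hmono (x + t • v) (x + s • v)
    have he : (x + t • v) - (x + s • v) = (t - s) • v := by module
    rw [he, real_inner_smul_right, inner_sub_left] at h0
    have hts : 0 < t - s := by linarith
    nlinarith
  have gconv := Monotone.convexOn_univ_of_deriv gdiff hmono'
  have h2 := gconv.2 (Set.mem_univ (0:ℝ)) (Set.mem_univ (1:ℝ)) ha hb hab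
  simp only [zero_smul, one_smul, add_zero, smul_eq_mul] at h2
  have hxy : a • x + b • y = x + b • v := by
    have : a = 1 - b := by linarith
    rw [this, hv]; module
  have hxv : x + v = y := by rw [hv]; abel
  rw [hxv] at h2
  rw [hxy]
  simpa using h2
variable {E : Type*} [NormedAddCommGroup E] [InnerProductSpace ℝ E] [CompleteSpace E]

lemma hasGradientAt_const_mul_sq (c : ℝ) (x : E) :
    HasGradientAt (fun z : E => c * ‖z‖ ^ 2) ((2 * c) • x) x := by
  have hinner : HasFDerivAt (fun z : E => ⟪z, z⟫)
      ((fderivInnerCLM ℝ (x, x)).comp ((ContinuousLinearMap.id ℝ E).prod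
        (ContinuousLinearMap.id ℝ E))) x :=
    (hasFDerivAt_id x).inner ℝ (hasFDerivAt_id x)
  have h2 : HasFDerivAt (fun z : E => c * ⟪z, z⟫)
      (c • ((fderivInnerCLM ℝ (x, x)).comp ((ContinuousLinearMap.id ℝ E).prod
        (ContinuousLinearMap.id ℝ E)))) x := hinner.const_mul c
  have heq : (fun z : E => c * ⟪z, z⟫) = fun z : E => c * ‖z‖ ^ 2 := by
    funext z; rw [real_inner_self_eq_norm_sq]
  rw [heq] at h2
  have h3 := h2.hasGradientAt
  convert h3 using 1
  refine ext_inner_right ℝ fun v => ?_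
  rw [InnerProductSpace.toDual_symm_apply]
  simp only [ContinuousLinearMap.coe_smul', Pi.smul_apply,
    ContinuousLinearMap.coe_comp', Function.comp_apply, ContinuousLinearMap.prod_apply,
    ContinuousLinearMap.coe_id', id_eq, fderivInnerCLM_apply, smul_eq_mul,
    real_inner_smul_left]
  rw [real_inner_comm v x]
  ring

lemma hasGradientAt_sub_sq (g : E → ℝ) (hg : Differentiable ℝ g) (c : ℝ) (x : E) :
    HasGradientAt (fun z => g z - c * ‖z‖ ^ 2) (gradient g x - (2 * c) • x) x := by
  have h1 := (hg x).hasGradientAt.hasFDerivAt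
  have h2 := (hasGradientAt_const_mul_sq c x).hasFDerivAt
  have h := h1.sub h2
  rw [← map_sub] at h
  exact hasGradientAt_iff_hasFDerivAt.mpr h

lemma hasGradientAt_sq_sub (g : E → ℝ) (hg : Differentiable ℝ g) (c : ℝ) (x : E) :
    HasGradientAt (fun z => c * ‖z‖ ^ 2 - g z) ((2 * c) • x - gradient g x) x := by
  have h1 := (hg x).hasGradientAt.hasFDerivAt
  have h2 := (hasGradientAt_const_mul_sq c x).hasFDerivAt
  have h := h2.sub h1
  rw [← map_sub] at h
  exact hasGradientAt_iff_hasFDerivAt.mpr h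

lemma descent_ineq (f : E → ℝ) (hf : Differentiable ℝ f) (Lf : ℝ)
    (hlip : ∀ a b, ‖gradient f a - gradient f b‖ ≤ Lf * ‖a - b‖) (a b : E) :
    f b ≤ f a + ⟪gradient f a, b - a⟫ + Lf / 2 * ‖b - a‖ ^ 2 := by
  have hdiff : Differentiable ℝ (fun z : E => Lf / 2 * ‖z‖ ^ 2 - f z) :=
    fun x => (hasGradientAt_sq_sub f hf (Lf / 2) x).differentiableAt
  have hconv : ConvexOn ℝ Set.univ (fun z : E => Lf / 2 * ‖z‖ ^ 2 - f z) := by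
    apply convexOn_of_monotone_gradient _ hdiff
    intro u v
    rw [(hasGradientAt_sq_sub f hf (Lf / 2) u).gradient,
      (hasGradientAt_sq_sub f hf (Lf / 2) v).gradient]
    have he : ((2 * (Lf / 2)) • u - gradient f u) - ((2 * (Lf / 2)) • v - gradient f v)
        = Lf • (u - v) - (gradient f u - gradient f v) := by module
    rw [he, inner_sub_left, real_inner_smul_left, real_inner_self_eq_norm_sq]
    have h1 := hlip u v
    have h2 := real_inner_le_norm (gradient f u - gradient f v) (u - v)
    nlinarith [norm_nonneg (u - v), norm_nonneg (gradient f u - gradient f v),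
      mul_le_mul_of_nonneg_right h1 (norm_nonneg (u - v))]
  have ht := convex_tangent_le _ hconv hdiff a b
  rw [(hasGradientAt_sq_sub f hf (Lf / 2) a).gradient, inner_sub_left,
    real_inner_smul_left] at ht
  have hb : b = a + (b - a) := by abel
  have hnb : ‖b‖ ^ 2 = ‖a‖ ^ 2 + 2 * ⟪a, b - a⟫ + ‖b - a‖ ^ 2 := by
    nth_rewrite 1 [hb]; rw [norm_add_sq_real]
  rw [hnb] at ht; ring_nf at ht ⊢; linarith

lemma strong_tangent (Q : E → ℝ) (hQd : Differentiable ℝ Q) (M : ℝ)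
    (hconv : ConvexOn ℝ Set.univ (fun z => Q z - M / 2 * ‖z‖ ^ 2)) (a b : E) :
    Q a + ⟪gradient Q a, b - a⟫ + M / 2 * ‖b - a‖ ^ 2 ≤ Q b := by
  have hdiff : Differentiable ℝ (fun z : E => Q z - M / 2 * ‖z‖ ^ 2) :=
    fun x => (hasGradientAt_sub_sq Q hQd (M / 2) x).differentiableAt
  have ht := convex_tangent_le _ hconv hdiff a b
  rw [(hasGradientAt_sub_sq Q hQd (M / 2) a).gradient, inner_sub_left,
    real_inner_smul_left] at ht
  have hb : b = a + (b - a) := by abel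
  have hnb : ‖b‖ ^ 2 = ‖a‖ ^ 2 + 2 * ⟪a, b - a⟫ + ‖b - a‖ ^ 2 := by
    nth_rewrite 1 [hb]; rw [norm_add_sq_real]
  rw [hnb] at ht; ring_nf at ht ⊢; linarith

lemma convexOn_of_sconv (Q : E → ℝ) (M : ℝ) (hM : 0 ≤ M)
    (hconv : ConvexOn ℝ Set.univ (fun z => Q z - M / 2 * ‖z‖ ^ 2)) :
    ConvexOn ℝ Set.univ Q := by
  have hsq : ConvexOn ℝ Set.univ (fun z : E => M / 2 * ‖z‖ ^ 2) := by
    apply convexOn_of_monotone_gradient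
    · exact fun x => (hasGradientAt_const_mul_sq (M / 2) x).differentiableAt
    · intro u v
      rw [(hasGradientAt_const_mul_sq (M / 2) u).gradient,
        (hasGradientAt_const_mul_sq (M / 2) v).gradient, ← smul_sub, real_inner_smul_left,
        real_inner_self_eq_norm_sq]
      nlinarith [sq_nonneg ‖u - v‖, norm_nonneg (u - v)]
  have h := hconv.add hsq
  have heq : ((fun z : E => Q z - M / 2 * ‖z‖ ^ 2) + fun z : E => M / 2 * ‖z‖ ^ 2) = Q := by
    funext z; simp
  rwa [heq] at h

lemma rpow_concave_ineq {p a b ε : ℝ} (hp0 : 0 < p) (hp1 : p < 1) (ha : 0 ≤ a) (hb : 0 ≤ b)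
    (hε : 0 < ε) :
    (b + ε) ^ p ≤ (a + ε) ^ p + p * (a + ε) ^ (p - 1) * (b - a) := by
  set c := a + ε with hc
  have hcpos : 0 < c := by positivity
  set s := (b - a) / c with hs
  have hs1 : -1 ≤ s := by
    rw [hs, le_div_iff₀ hcpos]
    nlinarith
  have key : (1 + s) ^ p ≤ 1 + p * s :=
    rpow_one_add_le_one_add_mul_self hs1 hp0.le hp1.le
  have h1s : (0:ℝ) ≤ 1 + s := by nlinarith
  have hbe : b + ε = c * (1 + s) := by
    rw [hs]; field_simp; rw [hc]; ring
  calc (b + ε) ^ p = c ^ p * (1 + s) ^ p := by rw [hbe, Real.mul_rpow hcpos.le h1s]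
    _ ≤ c ^ p * (1 + p * s) :=
        mul_le_mul_of_nonneg_left key (Real.rpow_nonneg hcpos.le p)
    _ = c ^ p + p * (c ^ p / c) * (b - a) := by rw [hs]; field_simp
    _ = c ^ p + p * c ^ (p - 1) * (b - a) := by rw [Real.rpow_sub_one hcpos.ne']
end Helpers
open scoped RealInnerProductSpace

namespace IRL1SR

variable {n : ℕ} (S : IRL1SR n)

lemma w_pos (k : ℕ) (j : Fin n) : 0 < wfun S.p (S.x k j) (S.eps k j) :=
  mul_pos S.hp0 (Real.rpow_pos_of_pos (by have := S.heps_pos k j; positivity) _)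

lemma strong_min (k : ℕ) (z : EuclideanSpace ℝ (Fin n)) :
    S.Q k (S.x (k+1)) + S.lam * ∑ j, wfun S.p (S.x k j) (S.eps k j) * |S.x (k+1) j|
      + S.M / 2 * ‖z - S.x (k+1)‖ ^ 2
    ≤ S.Q k z + S.lam * ∑ j, wfun S.p (S.x k j) (S.eps k j) * |z j| := by
  set a := S.x (k+1) with ha
  set v := z - a with hv
  have hM0 : 0 < S.M := lt_of_le_of_lt (by have := S.hLf; linarith) S.hM
  -- the inequality with a factor (1 - t)
  have ht : ∀ t : ℝ, 0 < t → t ≤ 1 →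
      S.Q k a + S.lam * ∑ j, wfun S.p (S.x k j) (S.eps k j) * |a j|
        + S.M / 2 * (1 - t) * ‖v‖ ^ 2
      ≤ S.Q k z + S.lam * ∑ j, wfun S.p (S.x k j) (S.eps k j) * |z j| := by
    intro t ht0 ht1
    set xt := a + t • v with hxt
    have hz : z = a + v := by rw [hv]; abel
    have hxteq : (1 - t) • a + t • z = xt := by rw [hxt, hv]; module
    have hψ := (S.hQ_sconv k).2 (Set.mem_univ a) (Set.mem_univ z)
      (show (0:ℝ) ≤ 1 - t by linarith) ht0.le (by ring)
    rw [hxteq] at hψ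
    simp only [smul_eq_mul] at hψ
    have h1 : ‖xt‖ ^ 2 = ‖a‖ ^ 2 + 2 * t * ⟪a, v⟫ + t ^ 2 * ‖v‖ ^ 2 := by
      rw [hxt, norm_add_sq_real, real_inner_smul_right, norm_smul]
      simp [mul_pow, sq_abs]
      ring
    have h2 : ‖z‖ ^ 2 = ‖a‖ ^ 2 + 2 * ⟪a, v⟫ + ‖v‖ ^ 2 := by
      rw [hz, norm_add_sq_real]
    rw [h1, h2] at hψ
    have e1 : S.Q k xt ≤ (1 - t) * S.Q k a + t * S.Q k z
        - S.M / 2 * t * (1 - t) * ‖v‖ ^ 2 := by nlinarith [hψ]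
    -- the ℓ¹ part
    have habs : ∀ j : Fin n, |xt j| ≤ (1 - t) * |a j| + t * |z j| := by
      intro j
      have hxtj : xt j = (1 - t) * a j + t * z j := by
        rw [← hxteq]
        simp [PiLp.add_apply, PiLp.smul_apply, smul_eq_mul]
      rw [hxtj]
      calc |(1 - t) * a j + t * z j| ≤ |(1 - t) * a j| + |t * z j| := abs_add_le _ _
        _ = (1 - t) * |a j| + t * |z j| := by
            rw [abs_mul, abs_mul, abs_of_nonneg (by linarith : (0:ℝ) ≤ 1 - t),
              abs_of_nonneg ht0.le]
    have e2 : ∑ j, wfun S.p (S.x k j) (S.eps k j) * |xt j|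
        ≤ (1 - t) * ∑ j, wfun S.p (S.x k j) (S.eps k j) * |a j|
          + t * ∑ j, wfun S.p (S.x k j) (S.eps k j) * |z j| := by
      rw [Finset.mul_sum, Finset.mul_sum, ← Finset.sum_add_distrib]
      apply Finset.sum_le_sum
      intro j _
      have hw := (S.w_pos k j).le
      calc wfun S.p (S.x k j) (S.eps k j) * |xt j|
          ≤ wfun S.p (S.x k j) (S.eps k j) * ((1 - t) * |a j| + t * |z j|) :=
            mul_le_mul_of_nonneg_left (habs j) hw
        _ = (1 - t) * (wfun S.p (S.x k j) (S.eps k j) * |a j|)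
            + t * (wfun S.p (S.x k j) (S.eps k j) * |z j|) := by ring
    have hGmin := S.hmin k xt
    rw [← ha] at hGmin
    have hlam := S.hlam.le
    have e2' : S.lam * ∑ j, wfun S.p (S.x k j) (S.eps k j) * |xt j|
        ≤ S.lam * ((1 - t) * ∑ j, wfun S.p (S.x k j) (S.eps k j) * |a j|
          + t * ∑ j, wfun S.p (S.x k j) (S.eps k j) * |z j|) :=
      mul_le_mul_of_nonneg_left e2 hlam
    have hcomb : S.Q k a + S.lam * ∑ j, wfun S.p (S.x k j) (S.eps k j) * |a j|
        ≤ (1 - t) * (S.Q k a + S.lam * ∑ j, wfun S.p (S.x k j) (S.eps k j) * |a j|)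
          + t * (S.Q k z + S.lam * ∑ j, wfun S.p (S.x k j) (S.eps k j) * |z j|)
          - S.M / 2 * t * (1 - t) * ‖v‖ ^ 2 := by nlinarith [hGmin, e1, e2']
    have key : t * (S.Q k a + S.lam * ∑ j, wfun S.p (S.x k j) (S.eps k j) * |a j|
        + S.M / 2 * (1 - t) * ‖v‖ ^ 2)
        ≤ t * (S.Q k z + S.lam * ∑ j, wfun S.p (S.x k j) (S.eps k j) * |z j|) := by
      nlinarith [hcomb]
    exact le_of_mul_le_mul_left key ht0
  -- pass to the limit t → 0
  have hlim : Tendsto (fun m : ℕ => S.Q k a + S.lam * ∑ j, wfun S.p (S.x k j) (S.eps k j) * |a j|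
      + S.M / 2 * (1 - 1 / (m + 1)) * ‖v‖ ^ 2) atTop
      (nhds (S.Q k a + S.lam * ∑ j, wfun S.p (S.x k j) (S.eps k j) * |a j|
        + S.M / 2 * ‖v‖ ^ 2)) := by
    have h := tendsto_one_div_add_atTop_nhds_zero_nat (𝕜 := ℝ)
    have : Tendsto (fun m : ℕ => S.M / 2 * (1 - 1 / (m + 1)) * ‖v‖ ^ 2) atTop
        (nhds (S.M / 2 * ‖v‖ ^ 2)) := by
      have := ((tendsto_const_nhds (x := (1:ℝ))).sub h).const_mul (S.M / 2)
      have := this.mul_const (‖v‖ ^ 2)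
      simpa using this
    simpa using (tendsto_const_nhds.add this)
  have hle : S.Q k a + S.lam * ∑ j, wfun S.p (S.x k j) (S.eps k j) * |a j|
      + S.M / 2 * ‖v‖ ^ 2
      ≤ S.Q k z + S.lam * ∑ j, wfun S.p (S.x k j) (S.eps k j) * |z j| := by
    refine le_of_tendsto hlim ?_
    filter_upwards with m
    apply ht
    · positivity
    · rw [div_le_one (by positivity)]
      have : (0:ℝ) ≤ (m:ℝ) := Nat.cast_nonneg m
      linarith
  calc S.Q k a + S.lam * ∑ j, wfun S.p (S.x k j) (S.eps k j) * |a j|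
      + S.M / 2 * ‖z - a‖ ^ 2
      = S.Q k a + S.lam * ∑ j, wfun S.p (S.x k j) (S.eps k j) * |a j|
        + S.M / 2 * ‖v‖ ^ 2 := by rw [hv]
    _ ≤ _ := hle

lemma eps_anti (k : ℕ) (j : Fin n) : S.eps (k+1) j ≤ S.eps k j := by
  by_cases h : S.x (k+1) j = 0
  · exact (S.heps_SR_zero k j h).le
  · have h1 := S.heps_SR_nonzero k j h
    have h2 := S.heps_pos k j
    nlinarith [S.hmu1]

lemma descent (k : ℕ) : S.Feps (S.x (k+1)) (S.eps (k+1)) ≤ S.Feps (S.x k) (S.eps k) := by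
  set a := S.x k with ha
  set b := S.x (k+1) with hb
  set e := S.eps k with he
  have h1 := S.strong_min k a
  have h2 := strong_tangent (S.Q k) (S.hQ_diff k) S.M (S.hQ_sconv k) a b
  rw [show gradient (S.Q k) a = gradient S.f a from S.hQ_grad k] at h2
  have h3 := descent_ineq S.f S.hf_diff S.Lf S.hf_lip a b
  have hnorm : ‖a - b‖ ^ 2 = ‖b - a‖ ^ 2 := by rw [norm_sub_rev]
  rw [hnorm] at h1
  have hD : (0:ℝ) ≤ ‖b - a‖ ^ 2 := by positivity
  have hfs : S.f b + S.lam * ∑ j, wfun S.p (a j) (e j) * |b j|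
      ≤ S.f a + S.lam * ∑ j, wfun S.p (a j) (e j) * |a j| := by
    nlinarith [S.hM]
  have h4 : ∑ j, (|b j| + e j) ^ S.p
      ≤ ∑ j, (|a j| + e j) ^ S.p + ∑ j, wfun S.p (a j) (e j) * (|b j| - |a j|) := by
    rw [← Finset.sum_add_distrib]
    apply Finset.sum_le_sum
    intro j _
    have := rpow_concave_ineq S.hp0 S.hp1 (abs_nonneg (a j)) (abs_nonneg (b j))
      (S.heps_pos k j)
    calc (|b j| + e j) ^ S.p
        ≤ (|a j| + e j) ^ S.p + S.p * (|a j| + e j) ^ (S.p - 1) * (|b j| - |a j|) := this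
      _ = (|a j| + e j) ^ S.p + wfun S.p (a j) (e j) * (|b j| - |a j|) := by
          rw [wfun]
  have h5 : S.Feps b e ≤ S.Feps a e := by
    rw [IRL1SR.Feps, IRL1SR.Feps]
    have hsub : ∑ j, wfun S.p (a j) (e j) * (|b j| - |a j|)
        = (∑ j, wfun S.p (a j) (e j) * |b j|) - ∑ j, wfun S.p (a j) (e j) * |a j| := by
      rw [← Finset.sum_sub_distrib]
      apply Finset.sum_congr rfl
      intro j _; ring
    rw [hsub] at h4
    have h4' := mul_le_mul_of_nonneg_left h4 S.hlam.le
    nlinarith [hfs]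
  have h6 : S.Feps b (S.eps (k+1)) ≤ S.Feps b e := by
    rw [IRL1SR.Feps, IRL1SR.Feps]
    have : ∑ j, (|b j| + S.eps (k+1) j) ^ S.p ≤ ∑ j, (|b j| + e j) ^ S.p := by
      apply Finset.sum_le_sum
      intro j _
      apply Real.rpow_le_rpow (by have := S.heps_pos (k+1) j; positivity)
        (add_le_add_right (S.eps_anti k j) _) S.hp0.le
    nlinarith [mul_le_mul_of_nonneg_left this S.hlam.le]
  exact h6.trans h5

lemma feps_le (k : ℕ) : S.Feps (S.x k) (S.eps k) ≤ S.Feps (S.x 0) (S.eps 0) := by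
  induction k with
  | zero => exact le_rfl
  | succ m ih => exact (S.descent m).trans ih

lemma fobj_le_feps (k : ℕ) : S.Fobj (S.x k) ≤ S.Feps (S.x k) (S.eps k) := by
  rw [IRL1SR.Fobj, IRL1SR.Feps]
  have : ∑ j, |S.x k j| ^ S.p ≤ ∑ j, (|S.x k j| + S.eps k j) ^ S.p := by
    apply Finset.sum_le_sum
    intro j _
    apply Real.rpow_le_rpow (abs_nonneg _)
      (le_add_of_nonneg_right (S.heps_pos k j).le) S.hp0.le
  nlinarith [mul_le_mul_of_nonneg_left this S.hlam.le]

lemma exists_bound (hbdd : S.LevelBounded) : ∃ R : ℝ, 0 ≤ R ∧ ∀ k, ‖S.x k‖ ≤ R := by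
  rw [IRL1SR.LevelBounded, isBounded_iff_forall_norm_le] at hbdd
  obtain ⟨C, hC⟩ := hbdd
  refine ⟨C, ?_, fun k => hC _ ?_⟩
  · exact le_trans (norm_nonneg (S.x 0)) (hC _ (by
      simp only [Set.mem_setOf_eq]
      exact (S.fobj_le_feps 0).trans (S.feps_le 0)))
  · simp only [Set.mem_setOf_eq]
    exact (S.fobj_le_feps k).trans (S.feps_le k)

lemma coord_abs_le_norm (u : EuclideanSpace ℝ (Fin n)) (j : Fin n) : |u j| ≤ ‖u‖ := by
  rw [EuclideanSpace.norm_eq]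
  have h1 : |u j| = Real.sqrt (‖u j‖ ^ 2) := by
    rw [Real.sqrt_sq_eq_abs, Real.norm_eq_abs, abs_abs]
  rw [h1]
  apply Real.sqrt_le_sqrt
  exact Finset.single_le_sum (f := fun l => ‖u l‖ ^ 2) (fun l _ => by positivity)
    (Finset.mem_univ j)

lemma L_nonneg (i : Fin n) : 0 ≤ S.L := by
  have h := S.hQ_lip 0 0 (EuclideanSpace.single i 1)
  have he : ‖(0 : EuclideanSpace ℝ (Fin n)) - EuclideanSpace.single i (1:ℝ)‖ = 1 := by
    rw [zero_sub, norm_neg, EuclideanSpace.norm_single, norm_one]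
  rw [he, mul_one] at h
  exact le_trans (norm_nonneg _) h

lemma zero_step (hbdd : S.LevelBounded) (i : Fin n) :
    ∃ C : ℝ, ∀ k, C < S.lam * wfun S.p (S.x k i) (S.eps k i) → S.x (k+1) i = 0 := by
  obtain ⟨R, hR0, hR⟩ := S.exists_bound hbdd
  have hL := S.L_nonneg i
  have hLf := S.hLf
  refine ⟨(‖gradient S.f (S.x 0)‖ + S.Lf * (2*R)) + S.L * (3*R), fun k hk => ?_⟩
  by_contra hne
  set b := S.x (k+1) with hb
  set z : EuclideanSpace ℝ (Fin n) := WithLp.toLp 2 (Function.update b i 0) with hzdef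
  have hzj : ∀ j : Fin n, j ≠ i → z j = b j := fun j hj => Function.update_of_ne hj _ _
  have hzi : z i = 0 := Function.update_self i 0 b
  have hsplit : ∀ u : Fin n → ℝ, ∑ j, wfun S.p (S.x k j) (S.eps k j) * |u j|
      = (∑ j ∈ Finset.univ.erase i, wfun S.p (S.x k j) (S.eps k j) * |u j|)
        + wfun S.p (S.x k i) (S.eps k i) * |u i| :=
    fun u => (Finset.sum_erase_add _ _ (Finset.mem_univ i)).symm
  have hsum : ∑ j, wfun S.p (S.x k j) (S.eps k j) * |z j|
      = (∑ j, wfun S.p (S.x k j) (S.eps k j) * |b j|)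
        - wfun S.p (S.x k i) (S.eps k i) * |b i| := by
    rw [hsplit z, hsplit b,
      Finset.sum_congr rfl (fun j hj => by rw [hzj j (Finset.ne_of_mem_erase hj)])]
    rw [hzi]
    simp
  have hmin := S.hmin k z
  rw [hsum, ← hb] at hmin
  have hM0 : (0:ℝ) ≤ S.M := by linarith [S.hM]
  have hQconv := convexOn_of_sconv (S.Q k) S.M hM0 (S.hQ_sconv k)
  have htan := convex_tangent_le (S.Q k) hQconv (S.hQ_diff k) z b
  have hbz : b - z = EuclideanSpace.single i (b i) := by
    ext j
    by_cases hj : j = i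
    · subst hj
      simp [hzi, EuclideanSpace.single_apply]
    · simp [hzj j hj, EuclideanSpace.single_apply, hj]
  have hnbz : ‖b - z‖ = |b i| := by
    rw [hbz, EuclideanSpace.norm_single, Real.norm_eq_abs]
  have hCS := abs_real_inner_le_norm (gradient (S.Q k) z) (b - z)
  rw [hnbz] at hCS
  -- bound on the gradient of Q k at z
  have hzxk : ‖z - S.x k‖ ≤ 3 * R := by
    have h1 : ‖z - b‖ = |b i| := by rw [norm_sub_rev, hnbz]
    have h2 : |b i| ≤ ‖b‖ := coord_abs_le_norm b i
    calc ‖z - S.x k‖ = ‖(z - b) + (b - S.x k)‖ := by abel_nf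
      _ ≤ ‖z - b‖ + ‖b - S.x k‖ := norm_add_le _ _
      _ ≤ ‖z - b‖ + (‖b‖ + ‖S.x k‖) := by linarith [norm_sub_le b (S.x k)]
      _ ≤ 3 * R := by
          have := hR (k+1); have := hR k
          rw [h1]
          simp only [← hb] at *
          linarith
  have hxk0 : ‖S.x k - S.x 0‖ ≤ 2 * R := by
    calc ‖S.x k - S.x 0‖ ≤ ‖S.x k‖ + ‖S.x 0‖ := norm_sub_le _ _
      _ ≤ 2 * R := by linarith [hR k, hR 0]
  have hgf : ‖gradient S.f (S.x k)‖ ≤ ‖gradient S.f (S.x 0)‖ + S.Lf * (2*R) := by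
    have e2 := S.hf_lip (S.x k) (S.x 0)
    calc ‖gradient S.f (S.x k)‖
        = ‖(gradient S.f (S.x k) - gradient S.f (S.x 0)) + gradient S.f (S.x 0)‖ := by
          rw [sub_add_cancel]
      _ ≤ ‖gradient S.f (S.x k) - gradient S.f (S.x 0)‖ + ‖gradient S.f (S.x 0)‖ :=
          norm_add_le _ _
      _ ≤ ‖gradient S.f (S.x 0)‖ + S.Lf * (2*R) := by
          nlinarith [mul_le_mul_of_nonneg_left hxk0 hLf]
  have hgz : ‖gradient (S.Q k) z‖
      ≤ (‖gradient S.f (S.x 0)‖ + S.Lf * (2*R)) + S.L * (3*R) := by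
    have e1 := S.hQ_lip k z (S.x k)
    calc ‖gradient (S.Q k) z‖
        = ‖(gradient (S.Q k) z - gradient (S.Q k) (S.x k)) + gradient (S.Q k) (S.x k)‖ := by
          rw [sub_add_cancel]
      _ ≤ ‖gradient (S.Q k) z - gradient (S.Q k) (S.x k)‖ + ‖gradient (S.Q k) (S.x k)‖ :=
          norm_add_le _ _
      _ ≤ S.L * (3*R) + ‖gradient (S.Q k) (S.x k)‖ := by
          nlinarith [mul_le_mul_of_nonneg_left hzxk hL]
      _ = S.L * (3*R) + ‖gradient S.f (S.x k)‖ := by rw [S.hQ_grad k]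
      _ ≤ (‖gradient S.f (S.x 0)‖ + S.Lf * (2*R)) + S.L * (3*R) := by linarith
  have hbi : 0 < |b i| := abs_pos.mpr hne
  have hkey : S.lam * wfun S.p (S.x k i) (S.eps k i) * |b i|
      ≤ ((‖gradient S.f (S.x 0)‖ + S.Lf * (2*R)) + S.L * (3*R)) * |b i| := by
    have h1 : S.lam * wfun S.p (S.x k i) (S.eps k i) * |b i| ≤ S.Q k z - S.Q k b := by
      nlinarith [hmin]
    have h2 : S.Q k z - S.Q k b ≤ ‖gradient (S.Q k) z‖ * |b i| := by
      nlinarith [htan, hCS, neg_abs_le ⟪gradient (S.Q k) z, b - z⟫]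
    calc S.lam * wfun S.p (S.x k i) (S.eps k i) * |b i| ≤ S.Q k z - S.Q k b := h1
      _ ≤ ‖gradient (S.Q k) z‖ * |b i| := h2
      _ ≤ _ := mul_le_mul_of_nonneg_right hgz (abs_nonneg _)
  nlinarith [mul_lt_mul_of_pos_right hk hbi]

end IRL1SR

/-- In the IRL1 setting with the SR update rule and bounded level
set, for each coordinate `i`: if `ε_i^k → 0`, then `liminf |x_i^k| > 0`. -/
theorem stmt15 {n : ℕ} (S : IRL1SR n) (hbdd : S.LevelBounded) (i : Fin n)
    (h0 : Tendsto (fun k => S.eps k i) atTop (nhds 0)) :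
    0 < Filter.liminf (fun k => |S.x k i|) Filter.atTop := by
  by_contra hcon
  push_neg at hcon
  obtain ⟨C, hC⟩ := S.zero_step hbdd i
  obtain ⟨R, hR0, hR⟩ := S.exists_bound hbdd
  set C' := max C 0 + 1 with hC'def
  have hC'pos : 0 < C' := by have := le_max_right C 0; rw [hC'def]; linarith
  have hCC' : C < C' := lt_of_le_of_lt (le_max_left C 0) (by rw [hC'def]; linarith)
  have hbase : 0 < S.lam * S.p / C' := by
    have := S.hlam; have := S.hp0; positivity
  set δ := (S.lam * S.p / C') ^ (1 / (1 - S.p)) with hδdef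
  have hδpos : 0 < δ := Real.rpow_pos_of_pos hbase _
  have h1p : (0:ℝ) < 1 - S.p := by have := S.hp1; linarith
  have hδval : S.lam * S.p * δ ^ (S.p - 1) = C' := by
    have hexp : (1 / (1 - S.p)) * (S.p - 1) = -1 := by
      field_simp
      ring
    rw [hδdef, ← Real.rpow_mul hbase.le, hexp, Real.rpow_neg_one]
    have hne : S.lam * S.p ≠ 0 := by have := S.hlam; have := S.hp0; positivity
    rw [inv_div]
    field_simp
    exact div_self hne
  have hweight : ∀ k, |S.x k i| + S.eps k i ≤ δ →
      C < S.lam * wfun S.p (S.x k i) (S.eps k i) := by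
    intro k hsmall
    have hspos : 0 < |S.x k i| + S.eps k i := by
      have := S.heps_pos k i; positivity
    have hmono : δ ^ (S.p - 1) ≤ (|S.x k i| + S.eps k i) ^ (S.p - 1) :=
      Real.rpow_le_rpow_of_nonpos hspos hsmall (by linarith [S.hp1])
    have hge : C' ≤ S.lam * wfun S.p (S.x k i) (S.eps k i) := by
      rw [wfun, ← hδval]
      nlinarith [mul_le_mul_of_nonneg_left hmono
        (by have := S.hlam; have := S.hp0; positivity : (0:ℝ) ≤ S.lam * S.p)]
    linarith
  have hstay : ∀ k, |S.x k i| + S.eps k i ≤ δ →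
      ∀ j : ℕ, S.x (k+1+j) i = 0 ∧ S.eps (k+1+j) i = S.eps k i := by
    intro k hk0 j
    induction j with
    | zero =>
      have hx := hC k (hweight k hk0)
      exact ⟨by simpa using hx, by simpa using S.heps_SR_zero k i hx⟩
    | succ m ih =>
      obtain ⟨ihx, ihe⟩ := ih
      have hsmall : |S.x (k+1+m) i| + S.eps (k+1+m) i ≤ δ := by
        rw [ihx, ihe, abs_zero, zero_add]
        have := abs_nonneg (S.x k i)
        linarith
      have hx := hC (k+1+m) (hweight _ hsmall)
      have harith : k+1+(m+1) = (k+1+m)+1 := by omega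
      rw [harith]
      exact ⟨hx, by rw [S.heps_SR_zero (k+1+m) i hx, ihe]⟩
  have heps_small : ∀ᶠ k in atTop, S.eps k i < δ/2 :=
    h0.eventually_lt_const (by positivity)
  have hfreq : ∃ᶠ k in atTop, |S.x k i| < δ/2 := by
    have hbnd : Filter.IsCoboundedUnder (· ≥ ·) atTop (fun k => |S.x k i|) :=
      Filter.isCoboundedUnder_ge_of_le atTop
        (fun k => (IRL1SR.coord_abs_le_norm (S.x k) i).trans (hR k))
    exact Filter.frequently_lt_of_liminf_lt hbnd (lt_of_le_of_lt hcon (by positivity))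
  obtain ⟨k, hk1, hk2⟩ := (hfreq.and_eventually heps_small).exists
  have hin : |S.x k i| + S.eps k i ≤ δ := by linarith
  have hconst : (fun m => S.eps m i) =ᶠ[atTop] (fun _ => S.eps k i) := by
    rw [Filter.EventuallyEq, eventually_atTop]
    refine ⟨k+1, fun m hm => ?_⟩
    obtain ⟨j, rfl⟩ : ∃ j, m = k+1+j := ⟨m - (k+1), by omega⟩
    exact (hstay k hin j).2
  have hlim2 : Tendsto (fun m => S.eps m i) atTop (nhds (S.eps k i)) :=
    Filter.Tendsto.congr' hconst.symm tendsto_const_nhds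
  exact absurd (tendsto_nhds_unique hlim2 h0) (ne_of_gt (S.heps_pos k i))
end
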